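/- arXiv:1605.05490 — 15 statements merged into one kernel-verified Lean document; each statement's English description precedes it below -/
import Mathlib

section
/- A permutation π of {1,...,n} is decomposable (i.e., some proper nonempty prefix of π is a permutation of {1,...,i} for some i < n) and avoids the pattern 123 if and only if there exists i with 1 ≤ i ≤ n-1 such that π = i (i-1) ⋯ 1 n (n-1) ⋯ (i+1), i.e., π consists of the decreasing sequence from i down to 1 followed by the decreasing sequence from n down to i+1. -/
private lemma aux_dec (f : ℕ → ℕ) (m : ℕ)
    (hf : ∀ a b, a < b → b < m → f b < f a) :
    ∀ a b, a ≤ b → b < m → f b + (b - a) ≤ f a := by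
  intro a b
  induction b with
  | zero =>
    intro hab _
    have : a = 0 := by omega
    subst this
    omega
  | succ b ih =>
    intro hab hbm
    rcases Nat.lt_or_ge a (b + 1) with h | h
    · have h1 : f (b + 1) < f b := hf b (b + 1) (Nat.lt_succ_self b) hbm
      have h2 := ih (by omega) (by omega)
      omega
    · have : a = b + 1 := by omega
      subst this
      omega

/-- A permutation of {1,...,n} is decomposable and avoids 123 iff
it equals i(i-1)⋯1 n(n-1)⋯(i+1) for some 1 ≤ i ≤ n-1 (here 0-indexed). -/
theorem stmt0 (n : ℕ) (π : Equiv.Perm (Fin n)) :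
    ((∃ i : ℕ, 0 < i ∧ i < n ∧ ∀ a : Fin n, a.val < i ↔ (π a).val < i) ∧
      ¬ ∃ a b c : Fin n, a < b ∧ b < c ∧ π a < π b ∧ π b < π c) ↔
    ∃ i : ℕ, 1 ≤ i ∧ i ≤ n - 1 ∧
      (∀ a : Fin n, a.val < i → (π a).val = i - 1 - a.val) ∧
      (∀ a : Fin n, i ≤ a.val → (π a).val = n - 1 - (a.val - i)) := by
  constructor
  · rintro ⟨⟨i, hi0, hin, hpref⟩, havoid⟩
    -- strictly decreasing on the first block
    have hd1 : ∀ a b : Fin n, a.val < b.val → b.val < i → (π b).val < (π a).val := by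
      intro a b hab hbi
      by_contra h
      push_neg at h
      have hne : (π a).val ≠ (π b).val := by
        intro e
        have : a = b := π.injective (Fin.ext e)
        omega
      have hlt : (π a).val < (π b).val := lt_of_le_of_ne h hne
      refine havoid ⟨a, b, ⟨i, hin⟩, ?_, ?_, ?_, ?_⟩
      · exact Fin.lt_def.mpr hab
      · exact Fin.lt_def.mpr (by simpa using hbi)
      · exact Fin.lt_def.mpr hlt
      · rw [Fin.lt_def]
        have hb : (π b).val < i := (hpref b).mp hbi
        have hc : ¬ (π ⟨i, hin⟩).val < i := by
          intro hc
          have := (hpref ⟨i, hin⟩).mpr hc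
          simp at this
        omega
    -- strictly decreasing on the second block
    have hd2 : ∀ a b : Fin n, a.val < b.val → i ≤ a.val → (π b).val < (π a).val := by
      intro a b hab hia
      by_contra h
      push_neg at h
      have hne : (π a).val ≠ (π b).val := by
        intro e
        have : a = b := π.injective (Fin.ext e)
        omega
      have hlt : (π a).val < (π b).val := lt_of_le_of_ne h hne
      refine havoid ⟨⟨0, by omega⟩, a, b, ?_, ?_, ?_, ?_⟩
      · exact Fin.lt_def.mpr (by simpa using by omega)
      · exact Fin.lt_def.mpr hab
      · rw [Fin.lt_def]
        have hc : (π ⟨0, by omega⟩).val < i := (hpref ⟨0, by omega⟩).mp (by simpa using hi0)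
        have ha : ¬ (π a).val < i := by
          intro ha'
          have := (hpref a).mpr ha'
          omega
        omega
      · exact Fin.lt_def.mpr hlt
    refine ⟨i, hi0, by omega, ?_, ?_⟩
    · -- first block formula
      intro a ha
      set f : ℕ → ℕ := fun k => if h : k < n then (π ⟨k, h⟩).val else 0 with hf
      have hfval : ∀ k (h : k < n), f k = (π ⟨k, h⟩).val := by
        intro k h; simp [hf, h]
      have hfd : ∀ x y, x < y → y < i → f y < f x := by
        intro x y hxy hyi
        rw [hfval x (by omega), hfval y (by omega)]
        exact hd1 ⟨x, by omega⟩ ⟨y, by omega⟩ hxy hyi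
      have hub := aux_dec f i hfd 0 a.val (by omega) ha
      have hlb := aux_dec f i hfd a.val (i - 1) (by omega) (by omega)
      have hf0 : f 0 < i := by
        rw [hfval 0 (by omega)]
        exact (hpref ⟨0, by omega⟩).mp (by simpa using hi0)
      have hfa : f a.val = (π a).val := by
        rw [hfval a.val a.isLt]
      omega
    · -- second block formula
      intro a ha
      set g : ℕ → ℕ := fun k => if h : i + k < n then (π ⟨i + k, h⟩).val else 0 with hg
      have hgval : ∀ k (h : i + k < n), g k = (π ⟨i + k, h⟩).val := by
        intro k h; simp [hg, h]
      have hgd : ∀ x y, x < y → y < n - i → g y < g x := by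
        intro x y hxy hyn
        rw [hgval x (by omega), hgval y (by omega)]
        exact hd2 ⟨i + x, by omega⟩ ⟨i + y, by omega⟩ (by simpa using hxy) (by simp)
      have han : a.val < n := a.isLt
      have hub := aux_dec g (n - i) hgd 0 (a.val - i) (by omega) (by omega)
      have hlb := aux_dec g (n - i) hgd (a.val - i) (n - i - 1) (by omega) (by omega)
      have hg0 : g 0 < n := by
        rw [hgval 0 (by omega)]
        exact (π ⟨i + 0, by omega⟩).isLt
      have hglast : i ≤ g (n - i - 1) := by
        rw [hgval (n - i - 1) (by omega)]
        by_contra hc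
        push_neg at hc
        have := (hpref ⟨i + (n - i - 1), by omega⟩).mpr hc
        have h' : i + (n - i - 1) < i := this
        omega
      have hga : g (a.val - i) = (π a).val := by
        have he : (⟨i + (a.val - i), by omega⟩ : Fin n) = a := Fin.ext (by simp; omega)
        rw [hgval (a.val - i) (by omega), he]
      omega
  · rintro ⟨i, hi1, hin1, h1, h2⟩
    refine ⟨⟨i, by omega, by omega, fun a => ?_⟩, ?_⟩
    · constructor
      · intro ha
        have := h1 a ha
        omega
      · intro ha
        by_contra hai
        push_neg at hai
        have := h2 a hai
        have han : a.val < n := a.isLt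
        omega
    · rintro ⟨a, b, c, hab, hbc, hp1, hp2⟩
      rw [Fin.lt_def] at hab hbc hp1 hp2
      have hcn : c.val < n := c.isLt
      by_cases hbi : b.val < i
      · have hai : a.val < i := by omega
        have e1 := h1 a hai
        have e2 := h1 b hbi
        omega
      · have e1 := h2 b (by omega)
        have e2 := h2 c (by omega)
        omega
end

section
/- For every n ≥ 1, the number of indecomposable permutations of {1,...,n} that avoid the pattern 123 equals C_n − (n − 1), where C_n is the n-th Catalan number. -/
namespace Stmt1
variable {n : ℕ}

section PartsABD
open Finset

def Av123 (π : Equiv.Perm (Fin n)) : Prop :=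
  ¬ ∃ a b c : Fin n, a < b ∧ b < c ∧ π a < π b ∧ π b < π c

def Av321 (ρ : Equiv.Perm (Fin n)) : Prop :=
  ¬ ∃ a b c : Fin n, a < b ∧ b < c ∧ ρ b < ρ a ∧ ρ c < ρ b

def Dec (π : Equiv.Perm (Fin n)) : Prop :=
  ∃ i : ℕ, 0 < i ∧ i < n ∧ ∀ a : Fin n, a.val < i ↔ (π a).val < i

lemma card_filter_lt (v : Fin n) : (univ.filter fun x : Fin n => x < v).card = v.val := by
  have h : (univ.filter fun x : Fin n => x < v) = Finset.Iio v := by ext x; simp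
  rw [h, Fin.card_Iio]

lemma card_filter_le (v : Fin n) : (univ.filter fun x : Fin n => x ≤ v).card = v.val + 1 := by
  have h : (univ.filter fun x : Fin n => x ≤ v) = Finset.Iic v := by ext x; simp
  rw [h, Fin.card_Iic]

lemma card_filter_gt (v : Fin n) : (univ.filter fun x : Fin n => v < x).card = n - (v.val + 1) := by
  have h := Finset.card_filter_add_card_filter_not (s := (univ : Finset (Fin n)))
    (p := fun x : Fin n => x ≤ v)
  simp only [not_le] at h
  rw [card_filter_le v] at h
  have := Fintype.card_fin n ▸ Finset.card_univ (α := Fin n)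
  omega

lemma card_perm_filter_lt (ρ : Equiv.Perm (Fin n)) (v : Fin n) :
    (univ.filter fun x : Fin n => ρ x < v).card = v.val := by
  rw [← card_filter_lt v]
  exact Finset.card_bij' (fun x _ => ρ x) (fun y _ => ρ.symm y)
    (by simp) (by simp) (by simp) (by simp)

lemma card_perm_filter_gt (ρ : Equiv.Perm (Fin n)) (v : Fin n) :
    (univ.filter fun x : Fin n => v < ρ x).card = n - (v.val + 1) := by
  rw [← card_filter_gt v]
  exact Finset.card_bij' (fun x _ => ρ x) (fun y _ => ρ.symm y)
    (by simp) (by simp) (by simp) (by simp)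


lemma claimA (ρ : Equiv.Perm (Fin n)) {a b : Fin n} (hab : a < b) (hba : ρ b < ρ a)
    (hb : b < ρ b) : ∃ c, b < c ∧ ρ c < ρ b := by
  by_contra h
  push_neg at h
  set S := univ.filter fun x : Fin n => ρ x < ρ b with hS
  have hsub : S ⊆ (univ.filter fun x : Fin n => x ≤ b) \ {a, b} := by
    intro x hx
    simp only [hS, mem_filter, mem_univ, true_and] at hx
    simp only [mem_sdiff, mem_filter, mem_univ, true_and, mem_insert, mem_singleton]
    refine ⟨not_lt.1 fun hbx => absurd (h x hbx) (not_le.2 hx), ?_⟩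
    rintro (rfl | rfl)
    · exact absurd hx (not_lt.2 hba.le)
    · exact lt_irrefl _ hx
  have hcard := Finset.card_le_card hsub
  have h2 : ({a, b} : Finset (Fin n)) ⊆ univ.filter fun x : Fin n => x ≤ b := by
    intro x hx
    simp only [mem_insert, mem_singleton] at hx
    simp only [mem_filter, mem_univ, true_and]
    rcases hx with rfl | rfl
    · exact hab.le
    · exact le_refl _
  rw [Finset.card_sdiff_of_subset h2, card_filter_le, Finset.card_pair hab.ne] at hcard
  rw [hS, card_perm_filter_lt] at hcard
  have := hb
  rw [Fin.lt_def] at this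
  omega

lemma claimB (ρ : Equiv.Perm (Fin n)) {a b : Fin n} (hab : a < b) (hba : ρ b < ρ a)
    (ha : ρ a ≤ a) : ∃ c, c < a ∧ ρ a < ρ c := by
  by_contra h
  push_neg at h
  set S := univ.filter fun x : Fin n => ρ a < ρ x with hS
  have hsub : S ⊆ (univ.filter fun x : Fin n => a < x) \ {b} := by
    intro x hx
    simp only [hS, mem_filter, mem_univ, true_and] at hx
    simp only [mem_sdiff, mem_filter, mem_univ, true_and, mem_singleton]
    have hax : ¬ x < a := fun hxa => absurd (h x hxa) (not_le.2 hx)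
    have hxa : x ≠ a := by rintro rfl; exact lt_irrefl _ hx
    refine ⟨lt_of_le_of_ne (not_lt.1 hax) (Ne.symm hxa), ?_⟩
    rintro rfl
    exact absurd hx (not_lt.2 hba.le)
  have hcard := Finset.card_le_card hsub
  have h2 : ({b} : Finset (Fin n)) ⊆ univ.filter fun x : Fin n => a < x := by
    simp [hab]
  rw [Finset.card_sdiff_of_subset h2, card_filter_gt, Finset.card_singleton] at hcard
  rw [hS, card_perm_filter_gt] at hcard
  have h3 := ha; rw [Fin.le_def] at h3
  have h4 := hab; rw [Fin.lt_def] at h4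
  have h5 : b.val < n := b.isLt
  omega

lemma av321_iff (ρ : Equiv.Perm (Fin n)) : Av321 ρ ↔
    (∀ a b : Fin n, a < b → a < ρ a → b < ρ b → ρ a < ρ b) ∧
    (∀ a b : Fin n, a < b → ρ a ≤ a → ρ b ≤ b → ρ a < ρ b) := by
  constructor
  · intro hav
    constructor
    · intro a b hab ha hb
      by_contra hle
      have hba : ρ b < ρ a := lt_of_le_of_ne (not_lt.1 hle)
        (fun he => hab.ne' (ρ.injective he))
      obtain ⟨c, hbc, hc⟩ := claimA ρ hab hba hb
      exact hav ⟨a, b, c, hab, hbc, hba, hc⟩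
    · intro a b hab ha hb
      by_contra hle
      have hba : ρ b < ρ a := lt_of_le_of_ne (not_lt.1 hle)
        (fun he => hab.ne' (ρ.injective he))
      obtain ⟨c, hca, hc⟩ := claimB ρ hab hba ha
      exact hav ⟨c, a, b, hca, hab, hc, hba⟩
  · rintro ⟨h1, h2⟩ ⟨a, b, c, hab, hbc, h3, h4⟩
    rcases le_or_gt (ρ a) a with ha | ha <;> rcases le_or_gt (ρ b) b with hb | hb <;>
      rcases le_or_gt (ρ c) c with hc | hc
    · exact absurd (h2 a b hab ha hb) (not_lt.2 h3.le)
    · exact absurd (h2 a b hab ha hb) (not_lt.2 h3.le)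
    · exact absurd (h2 a c (hab.trans hbc) ha hc) (not_lt.2 (h4.trans h3).le)
    · exact absurd (h1 b c hbc hb hc) (not_lt.2 h4.le)
    · exact absurd (h2 b c hbc hb hc) (not_lt.2 h4.le)
    · exact absurd (h1 a c (hab.trans hbc) ha hc) (not_lt.2 (h4.trans h3).le)
    · exact absurd (h1 a b hab ha hb) (not_lt.2 h3.le)
    · exact absurd (h1 a b hab ha hb) (not_lt.2 h3.le)

/-- uniqueness of strictly monotone maps with prescribed image -/
lemma strictMonoOn_unique {s t : Finset (Fin n)} {f g : Fin n → Fin n}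
    (hf : StrictMonoOn f s) (hg : StrictMonoOn g s)
    (hft : s.image f = t) (hgt : s.image g = t) : ∀ x ∈ s, f x = g x := by
  set F : {x // x ∈ s} → {y // y ∈ t} := fun x => ⟨f x, hft ▸ mem_image_of_mem f x.2⟩ with hF
  set G : {x // x ∈ s} → {y // y ∈ t} := fun x => ⟨g x, hgt ▸ mem_image_of_mem g x.2⟩ with hG
  have hFm : StrictMono F := fun x y h => by
    simpa [hF, Subtype.mk_lt_mk] using hf x.2 y.2 h
  have hGm : StrictMono G := fun x y h => by
    simpa [hG, Subtype.mk_lt_mk] using hg x.2 y.2 h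
  have hFs : Function.Surjective F := by
    rintro ⟨y, hy⟩
    rw [← hft] at hy
    obtain ⟨x, hx, rfl⟩ := mem_image.1 hy
    exact ⟨⟨x, hx⟩, rfl⟩
  have hGs : Function.Surjective G := by
    rintro ⟨y, hy⟩
    rw [← hgt] at hy
    obtain ⟨x, hx, rfl⟩ := mem_image.1 hy
    exact ⟨⟨x, hx⟩, rfl⟩
  have hiso := Subsingleton.elim (StrictMono.orderIsoOfSurjective F hFm hFs)
    (StrictMono.orderIsoOfSurjective G hGm hGs)
  intro x hx
  have : F ⟨x, hx⟩ = G ⟨x, hx⟩ := by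
    rw [← StrictMono.coe_orderIsoOfSurjective F hFm hFs,
      ← StrictMono.coe_orderIsoOfSurjective G hGm hGs, hiso]
  exact congrArg Subtype.val this

/-- anti version -/
lemma strictAntiOn_unique {s t : Finset (Fin n)} {f g : Fin n → Fin n}
    (hf : StrictAntiOn f s) (hg : StrictAntiOn g s)
    (hft : s.image f = t) (hgt : s.image g = t) : ∀ x ∈ s, f x = g x := by
  set F : {x // x ∈ s} → ({y // y ∈ t})ᵒᵈ := fun x => ⟨f x, hft ▸ mem_image_of_mem f x.2⟩ with hF
  set G : {x // x ∈ s} → ({y // y ∈ t})ᵒᵈ := fun x => ⟨g x, hgt ▸ mem_image_of_mem g x.2⟩ with hG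
  have hFm : StrictMono F := fun x y h => by
    exact hf x.2 y.2 h
  have hGm : StrictMono G := fun x y h => by
    exact hg x.2 y.2 h
  have hFs : Function.Surjective F := by
    rintro ⟨y, hy⟩
    rw [← hft] at hy
    obtain ⟨x, hx, rfl⟩ := mem_image.1 hy
    exact ⟨⟨x, hx⟩, rfl⟩
  have hGs : Function.Surjective G := by
    rintro ⟨y, hy⟩
    rw [← hgt] at hy
    obtain ⟨x, hx, rfl⟩ := mem_image.1 hy
    exact ⟨⟨x, hx⟩, rfl⟩
  haveI : WellFoundedLT {x // x ∈ s} := Finite.to_wellFoundedLT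
  haveI : Subsingleton ({x // x ∈ s} ≃o ({y // y ∈ t})ᵒᵈ) :=
    OrderIso.subsingleton_of_wellFoundedLT
  have hiso := Subsingleton.elim (StrictMono.orderIsoOfSurjective F hFm hFs)
    (StrictMono.orderIsoOfSurjective G hGm hGs)
  intro x hx
  have : F ⟨x, hx⟩ = G ⟨x, hx⟩ := by
    rw [← StrictMono.coe_orderIsoOfSurjective F hFm hFs,
      ← StrictMono.coe_orderIsoOfSurjective G hGm hGs, hiso]
  exact congrArg Subtype.val this

/-- compare order iso with prefix counts -/
lemma L1 {s t : Finset (Fin n)} (f : {x // x ∈ s} ≃o {x // x ∈ t}) (x : Fin n) (hx : x ∈ s) :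
    (t.filter (fun y => y ≤ (f ⟨x, hx⟩ : Fin n))).card = (s.filter (fun y => y ≤ x)).card := by
  classical
  refine Finset.card_bij' (fun z hz => (f.symm ⟨z, (mem_filter.1 hz).1⟩ : Fin n))
    (fun y hy => (f ⟨y, (mem_filter.1 hy).1⟩ : Fin n)) (fun z hz => ?_) (fun y hy => ?_)
    (fun z hz => ?_) (fun y hy => ?_)
  · obtain ⟨hz1, hz2⟩ := mem_filter.1 hz
    refine mem_filter.2 ⟨(f.symm ⟨z, hz1⟩).2, ?_⟩
    have h2 : f.symm ⟨z, hz1⟩ ≤ f.symm (f ⟨x, hx⟩) := f.symm.monotone (Subtype.mk_le_mk.2 hz2)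
    rw [f.symm_apply_apply] at h2
    exact Subtype.coe_le_coe.2 h2
  · obtain ⟨hy1, hy2⟩ := mem_filter.1 hy
    exact mem_filter.2 ⟨(f ⟨y, hy1⟩).2, Subtype.coe_le_coe.2 (f.monotone (Subtype.mk_le_mk.2 hy2))⟩
  · simp
  · simp

/-- dominated pairs -/
def Dom (I V : Finset (Fin n)) : Prop :=
  I.card = V.card ∧ ∀ t : Fin n, (V.filter (fun y => y ≤ t)).card ≤ (I.filter (fun y => y < t)).card

/-- excedance set -/
def Exc (ρ : Equiv.Perm (Fin n)) : Finset (Fin n) := univ.filter fun i => i < ρ i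

lemma dom_exc (ρ : Equiv.Perm (Fin n)) : Dom (Exc ρ) ((Exc ρ).image ρ) := by
  constructor
  · exact (Finset.card_image_of_injective _ ρ.injective).symm
  · intro t
    have hsub : ((Exc ρ).image ρ).filter (fun y => y ≤ t) ⊆
        ((Exc ρ).filter (fun y => y < t)).image ρ := by
      intro v hv
      obtain ⟨hv1, hv2⟩ := mem_filter.1 hv
      obtain ⟨i, hi, rfl⟩ := mem_image.1 hv1
      have hie : i < ρ i := (mem_filter.1 hi).2
      exact mem_image.2 ⟨i, mem_filter.2 ⟨hi, hie.trans_le hv2⟩, rfl⟩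
    calc (((Exc ρ).image ρ).filter (fun y => y ≤ t)).card
        ≤ (((Exc ρ).filter (fun y => y < t)).image ρ).card := Finset.card_le_card hsub
      _ = ((Exc ρ).filter (fun y => y < t)).card := Finset.card_image_of_injective _ ρ.injective

lemma mono_on_exc {ρ : Equiv.Perm (Fin n)} (h : Av321 ρ) : StrictMonoOn ρ (Exc ρ) := by
  intro a ha b hb hab
  exact ((av321_iff ρ).1 h).1 a b hab (by simpa [Exc] using ha) (by simpa [Exc] using hb)

lemma mono_on_excc {ρ : Equiv.Perm (Fin n)} (h : Av321 ρ) :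
    StrictMonoOn ρ (((Exc ρ)ᶜ : Finset (Fin n)) : Set (Fin n)) := by
  intro a ha b hb hab
  simp only [Finset.mem_coe, Finset.mem_compl, Exc, mem_filter, mem_univ, true_and,
    not_lt] at ha hb
  exact ((av321_iff ρ).1 h).2 a b hab ha hb

lemma image_excc (ρ : Equiv.Perm (Fin n)) : (Exc ρ)ᶜ.image ρ = ((Exc ρ).image ρ)ᶜ := by
  ext y
  simp only [mem_image, mem_compl]
  constructor
  · rintro ⟨x, hx, rfl⟩ ⟨z, hz, he⟩
    exact hx (ρ.injective he ▸ hz)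
  · intro hy
    refine ⟨ρ.symm y, fun hm => hy ⟨ρ.symm y, hm, by simp⟩, by simp⟩

section Recon
variable (I V : Finset (Fin n))

/-- order iso on excedance parts -/
noncomputable def e1 (hc : I.card = V.card) : {x // x ∈ I} ≃o {x // x ∈ V} :=
  (I.orderIsoOfFin rfl).symm.trans (V.orderIsoOfFin hc.symm)

noncomputable def e2 (hc : I.card = V.card) : {x // x ∈ Iᶜ} ≃o {x // x ∈ Vᶜ} :=
  (Iᶜ.orderIsoOfFin rfl).symm.trans (Vᶜ.orderIsoOfFin
    (by rw [Finset.card_compl, Finset.card_compl, hc]))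

/-- reconstruction of the permutation from a pair of sets -/
noncomputable def recon (hc : I.card = V.card) : Equiv.Perm (Fin n) where
  toFun := fun x => if h : x ∈ I then (e1 I V hc ⟨x, h⟩ : Fin n)
    else (e2 I V hc ⟨x, Finset.mem_compl.2 h⟩ : Fin n)
  invFun := fun y => if h : y ∈ V then ((e1 I V hc).symm ⟨y, h⟩ : Fin n)
    else ((e2 I V hc).symm ⟨y, Finset.mem_compl.2 h⟩ : Fin n)
  left_inv := by
    intro x
    dsimp only
    by_cases h : x ∈ I
    · rw [dif_pos h, dif_pos (e1 I V hc ⟨x, h⟩).2]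
      rw [Subtype.coe_eta, OrderIso.symm_apply_apply]
    · rw [dif_neg h, dif_neg (Finset.mem_compl.1 (e2 I V hc ⟨x, Finset.mem_compl.2 h⟩).2)]
      rw [Subtype.coe_eta, OrderIso.symm_apply_apply]
  right_inv := by
    intro y
    dsimp only
    by_cases h : y ∈ V
    · rw [dif_pos h, dif_pos ((e1 I V hc).symm ⟨y, h⟩).2]
      rw [Subtype.coe_eta, OrderIso.apply_symm_apply]
    · rw [dif_neg h, dif_neg (Finset.mem_compl.1 ((e2 I V hc).symm ⟨y, Finset.mem_compl.2 h⟩).2)]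
      rw [Subtype.coe_eta, OrderIso.apply_symm_apply]

lemma recon_mem {hc : I.card = V.card} {x : Fin n} (h : x ∈ I) :
    recon I V hc x = (e1 I V hc ⟨x, h⟩ : Fin n) := dif_pos h

lemma recon_not_mem {hc : I.card = V.card} {x : Fin n} (h : x ∉ I) :
    recon I V hc x = (e2 I V hc ⟨x, Finset.mem_compl.2 h⟩ : Fin n) := dif_neg h

lemma compl_filter_card (s : Finset (Fin n)) (t : Fin n) :
    (sᶜ.filter (fun y => y ≤ t)).card + (s.filter (fun y => y ≤ t)).card = t.val + 1 := by
  classical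
  rw [← card_filter_le t]
  rw [← Finset.card_union_of_disjoint
    (Finset.disjoint_filter_filter (disjoint_compl_left : Disjoint sᶜ s))]
  congr 1
  rw [← Finset.filter_union]
  congr 1
  ext z
  by_cases hz : z ∈ s <;> simp [hz]

lemma filter_le_eq_insert {s : Finset (Fin n)} {x : Fin n} (h : x ∈ s) :
    s.filter (fun y => y ≤ x) = insert x (s.filter (fun y => y < x)) := by
  ext y
  simp only [mem_filter, mem_insert]
  constructor
  · rintro ⟨hy, hle⟩
    rcases lt_or_eq_of_le hle with h' | h'
    · exact Or.inr ⟨hy, h'⟩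
    · exact Or.inl h'
  · rintro (rfl | ⟨hy, hlt⟩)
    · exact ⟨h, le_refl _⟩
    · exact ⟨hy, hlt.le⟩

/-- the reconstructed permutation has excedances exactly on I -/
lemma recon_exc {hc : I.card = V.card} (hdom : Dom I V) {x : Fin n} (h : x ∈ I) :
    x < recon I V hc x := by
  rw [recon_mem I V h]
  by_contra hle
  push_neg at hle
  have hL := L1 (e1 I V hc) x h
  have h1 : (V.filter (fun y => y ≤ (e1 I V hc ⟨x, h⟩ : Fin n))).card ≤
      (V.filter (fun y => y ≤ x)).card := by
    apply Finset.card_le_card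
    intro y hy
    obtain ⟨hy1, hy2⟩ := mem_filter.1 hy
    exact mem_filter.2 ⟨hy1, hy2.trans hle⟩
  have h2 := hdom.2 x
  have h3 : (I.filter (fun y => y ≤ x)).card = (I.filter (fun y => y < x)).card + 1 := by
    rw [filter_le_eq_insert (s := I) h, Finset.card_insert_of_notMem (by simp)]
  omega

lemma recon_nonexc {hc : I.card = V.card} (hdom : Dom I V) {x : Fin n} (h : x ∉ I) :
    recon I V hc x ≤ x := by
  rw [recon_not_mem I V h]
  by_contra hlt
  push_neg at hlt
  have hL := L1 (e2 I V hc) x (Finset.mem_compl.2 h)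
  obtain ⟨z, hz⟩ : ∃ z : Fin n, z = (e2 I V hc ⟨x, Finset.mem_compl.2 h⟩ : Fin n) := ⟨_, rfl⟩
  rw [← hz] at hL hlt
  have hzz : z ∈ Vᶜ := hz ▸ (e2 I V hc ⟨x, Finset.mem_compl.2 h⟩).2
  have hsub : insert z (Vᶜ.filter (fun y => y ≤ x)) ⊆ Vᶜ.filter (fun y => y ≤ z) := by
    intro y hy
    rcases mem_insert.1 hy with rfl | hy'
    · exact mem_filter.2 ⟨hzz, le_refl _⟩
    · obtain ⟨hy1, hy2⟩ := mem_filter.1 hy'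
      exact mem_filter.2 ⟨hy1, hy2.trans hlt.le⟩
  have hcard := Finset.card_le_card hsub
  rw [Finset.card_insert_of_notMem (a := z) (s := Vᶜ.filter (fun y => y ≤ x))
    (fun hm => absurd (mem_filter.1 hm).2 (not_le.2 hlt))] at hcard
  have hA := compl_filter_card I x
  have hB := compl_filter_card V x
  have h2 := hdom.2 x
  have h4 : (I.filter (fun y => y < x)).card ≤ (I.filter (fun y => y ≤ x)).card :=
    Finset.card_le_card (fun y hy => mem_filter.2 ⟨(mem_filter.1 hy).1, (mem_filter.1 hy).2.le⟩)
  omega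

lemma av321_recon (hc : I.card = V.card) (hdom : Dom I V) : Av321 (recon I V hc) := by
  rw [av321_iff]
  constructor
  · intro a b hab ha hb
    have hmem_a : a ∈ I := by
      by_contra hna
      exact absurd (recon_nonexc I V hdom hna) (not_le.2 ha)
    have hmem_b : b ∈ I := by
      by_contra hnb
      exact absurd (recon_nonexc I V hdom hnb) (not_le.2 hb)
    rw [recon_mem I V hmem_a, recon_mem I V hmem_b]
    exact Subtype.coe_lt_coe.2 ((e1 I V hc).strictMono (Subtype.mk_lt_mk.2 hab))
  · intro a b hab ha hb
    have hmem_a : a ∉ I := fun hm => absurd (recon_exc I V hdom hm) (not_lt.2 ha)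
    have hmem_b : b ∉ I := fun hm => absurd (recon_exc I V hdom hm) (not_lt.2 hb)
    rw [recon_not_mem I V hmem_a, recon_not_mem I V hmem_b]
    exact Subtype.coe_lt_coe.2 ((e2 I V hc).strictMono (Subtype.mk_lt_mk.2 hab))

lemma exc_recon (hc : I.card = V.card) (hdom : Dom I V) : Exc (recon I V hc) = I := by
  ext x
  simp only [Exc, mem_filter, mem_univ, true_and]
  constructor
  · intro hx
    by_contra hn
    exact absurd (recon_nonexc I V hdom hn) (not_le.2 hx)
  · exact fun h => recon_exc I V hdom h

lemma image_recon (hc : I.card = V.card) (hdom : Dom I V) :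
    I.image (recon I V hc) = V := by
  ext y
  simp only [mem_image]
  constructor
  · rintro ⟨x, hx, rfl⟩
    rw [recon_mem I V hx]
    exact (e1 I V hc ⟨x, hx⟩).2
  · intro hy
    refine ⟨((e1 I V hc).symm ⟨y, hy⟩ : Fin n), ((e1 I V hc).symm ⟨y, hy⟩).2, ?_⟩
    rw [recon_mem I V ((e1 I V hc).symm ⟨y, hy⟩).2]
    rw [Subtype.coe_eta, OrderIso.apply_symm_apply]

end Recon

lemma av321_ext {ρ σ : Equiv.Perm (Fin n)} (hρ : Av321 ρ) (hσ : Av321 σ)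
    (h1 : Exc ρ = Exc σ) (h2 : (Exc ρ).image ρ = (Exc σ).image σ) : ρ = σ := by
  have hσ1 : StrictMonoOn σ (Exc ρ) := by rw [h1]; exact mono_on_exc hσ
  have hσ2 : StrictMonoOn σ (((Exc ρ)ᶜ : Finset (Fin n)) : Set (Fin n)) := by
    rw [h1]; exact mono_on_excc hσ
  have him1 : (Exc ρ).image σ = (Exc ρ).image ρ := by rw [h2, h1]
  have him2 : ((Exc ρ)ᶜ : Finset (Fin n)).image σ = ((Exc ρ)ᶜ : Finset (Fin n)).image ρ := by
    rw [image_excc, h2, ← image_excc, ← h1]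
  have hm1 := strictMonoOn_unique (mono_on_exc hρ) hσ1 rfl him1
  have hm2 := strictMonoOn_unique (mono_on_excc hρ) hσ2 rfl him2
  apply Equiv.ext
  intro x
  by_cases h : x ∈ Exc ρ
  · exact hm1 x h
  · exact hm2 x (Finset.mem_compl.2 h)

/-- main equivalence of part B -/
noncomputable def permPairEquiv :
    {ρ : Equiv.Perm (Fin n) // Av321 ρ} ≃
    {p : Finset (Fin n) × Finset (Fin n) // Dom p.1 p.2} where
  toFun ρ := ⟨(Exc ρ.1, (Exc ρ.1).image ρ.1), dom_exc ρ.1⟩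
  invFun p := ⟨recon p.1.1 p.1.2 p.2.1, av321_recon p.1.1 p.1.2 p.2.1 p.2⟩
  left_inv := by
    rintro ⟨ρ, hρ⟩
    have hc := (dom_exc ρ).1
    apply Subtype.ext
    apply av321_ext (av321_recon _ _ _ (dom_exc ρ)) hρ
    · rw [exc_recon _ _ _ (dom_exc ρ)]
    · rw [exc_recon _ _ _ (dom_exc ρ), image_recon _ _ _ (dom_exc ρ)]
  right_inv := by
    rintro ⟨⟨I, V⟩, hdom⟩
    apply Subtype.ext
    have h1 := exc_recon I V hdom.1 hdom
    have h2 := image_recon I V hdom.1 hdom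
    simp only
    rw [Prod.mk.injEq]
    exact ⟨h1, by rw [h1, h2]⟩


end PartsABD

section Words
open List DyckStep
variable (f g : ℕ → Bool)

/-- the interleaved word: at step `t`, first a letter recording `g t` (D if true),
then a letter recording `f t` (U if true). -/
def Wd : ℕ → List DyckStep
  | 0 => []
  | k+1 => Wd k ++ [if g k then D else U, if f k then U else D]

/-- count of `true`s below `k` -/
def Fc (k : ℕ) : ℕ := ((List.range k).filter f).length

lemma Wd_succ (k : ℕ) :
    Wd f g (k+1) = Wd f g k ++ [if g k then D else U, if f k then U else D] := rfl

lemma Fc_succ (k : ℕ) : Fc f (k+1) = Fc f k + (if f k then 1 else 0) := by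
  unfold Fc
  rw [List.range_succ, List.filter_append]
  by_cases h : f k <;> simp [h]

lemma Fc_le (k : ℕ) : Fc f k ≤ k := by
  induction k with
  | zero => simp [Fc]
  | succ k ih => rw [Fc_succ]; split <;> omega

lemma Fc_mono {k : ℕ} : Fc f k ≤ Fc f (k+1) := by rw [Fc_succ]; split <;> omega

lemma Wd_length (k : ℕ) : (Wd f g k).length = 2 * k := by
  induction k with
  | zero => rfl
  | succ k ih => rw [Wd_succ, List.length_append, ih]; simp; omega

lemma Wd_count (k : ℕ) : (Wd f g k).count U = Fc f k + (k - Fc g k) ∧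
    (Wd f g k).count D = Fc g k + (k - Fc f k) := by
  induction k with
  | zero => simp [Wd, Fc]
  | succ k ih =>
    have h1 := Fc_le f k
    have h2 := Fc_le g k
    rw [Wd_succ, List.count_append, List.count_append, ih.1, ih.2]
    by_cases hf : f k <;> by_cases hg : g k <;>
      simp [hf, hg, List.count_cons, List.count_singleton, Fc_succ] <;> omega

lemma Wd_take_even {k m : ℕ} (h : k ≤ m) : (Wd f g m).take (2 * k) = Wd f g k := by
  induction m with
  | zero => interval_cases k; simp [Wd]
  | succ m ih =>
    rcases Nat.lt_or_ge k (m+1) with h' | h'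
    · rw [Wd_succ, List.take_append, ih (by omega)]
      have : 2 * k - (Wd f g m).length = 0 := by rw [Wd_length]; omega
      rw [this]
      simp
    · have : k = m + 1 := by omega
      subst this
      apply List.take_of_length_le
      rw [Wd_length]

lemma Wd_take_odd {k m : ℕ} (h : k < m) :
    (Wd f g m).take (2 * k + 1) = Wd f g k ++ [if g k then D else U] := by
  have h1 : (Wd f g m).take (2 * (k+1)) = Wd f g (k+1) := Wd_take_even f g (by omega)
  have h2 : (Wd f g m).take (2*k+1) = ((Wd f g m).take (2 * (k+1))).take (2*k+1) := by
    rw [List.take_take]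
    congr 1
    omega
  rw [h2, h1, Wd_succ, List.take_append]
  have h3 : 2 * k + 1 - (Wd f g k).length = 1 := by rw [Wd_length]; omega
  rw [List.take_of_length_le (by rw [Wd_length]; omega), h3]
  rfl

lemma Wd_getD_even {k t : ℕ} (h : t < k) (d : DyckStep) :
    (Wd f g k).getD (2*t) d = if g t then D else U := by
  have h1 : (Wd f g k).take (2*t+1) = Wd f g t ++ [if g t then D else U] := Wd_take_odd f g h
  have h2 : (Wd f g k).getD (2*t) d = ((Wd f g k).take (2*t+1)).getD (2*t) d := by
    rw [List.getD_eq_getElem (hn := by rw [Wd_length]; omega),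
      List.getD_eq_getElem (hn := by rw [List.length_take, Wd_length]; omega)]
    rw [List.getElem_take]
  rw [h2, h1, List.getD_append_right _ _ _ _ (by rw [Wd_length])]
  rw [Wd_length]
  simp
lemma Wd_getD_odd {k t : ℕ} (h : t < k) (d : DyckStep) :
    (Wd f g k).getD (2*t+1) d = if f t then U else D := by
  have h1 : (Wd f g k).take (2*(t+1)) = Wd f g (t+1) := Wd_take_even f g (by omega)
  have h2 : (Wd f g k).getD (2*t+1) d = ((Wd f g k).take (2*(t+1))).getD (2*t+1) d := by
    rw [List.getD_eq_getElem (hn := by rw [Wd_length]; omega),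
      List.getD_eq_getElem (hn := by rw [List.length_take, Wd_length]; omega)]
    rw [List.getElem_take]
  rw [h2, h1, Wd_succ]
  rw [List.getD_append_right _ _ _ _ (by rw [Wd_length]; omega), Wd_length]
  have : 2*t+1 - 2*t = 1 := by omega
  rw [this]
  simp

lemma Wd_dyck_counts {n : ℕ} (hFG : Fc f n = Fc g n) (hd : ∀ k, k < n → Fc g (k+1) ≤ Fc f k) :
    ∀ i, ((Wd f g n).take i).count D ≤ ((Wd f g n).take i).count U := by
  intro i
  rcases Nat.lt_or_ge i (2*n) with hi | hi
  · obtain ⟨k, hk⟩ : ∃ k, i = 2*k ∨ i = 2*k+1 := ⟨i/2, by omega⟩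
    rcases hk with rfl | rfl
    · rw [Wd_take_even f g (show k ≤ n by omega)]
      have h1 := (Wd_count f g k).1
      have h2 := (Wd_count f g k).2
      have h3 := Fc_le f k
      have h4 := Fc_le g k
      have h5 : Fc g k ≤ Fc f k := by
        rcases Nat.eq_zero_or_pos k with rfl | hk0
        · simp [Fc]
        · have := hd (k-1) (by omega)
          have h6 := Fc_mono g (k := k-1)
          have h7 := Fc_mono f (k := k-1)
          have e1 : k - 1 + 1 = k := by omega
          rw [e1] at this h6 h7
          omega
      omega
    · rw [Wd_take_odd f g (show k < n by omega)]
      have h1 := (Wd_count f g k).1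
      have h2 := (Wd_count f g k).2
      have h3 := Fc_le f k
      have h4 := Fc_le g k
      have h5 := hd k (by omega)
      have h6 := Fc_succ g k
      rw [List.count_append, List.count_append, h1, h2]
      by_cases hg : g k <;> simp [hg] at h6 ⊢ <;> omega
  · rw [List.take_of_length_le (by rw [Wd_length]; omega)]
    have h1 := (Wd_count f g n).1
    have h2 := (Wd_count f g n).2
    have h3 := Fc_le f n
    have h4 := Fc_le g n
    omega

lemma Wd_dyck_counts_rev {n : ℕ}
    (hpre : ∀ i, ((Wd f g n).take i).count D ≤ ((Wd f g n).take i).count U) :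
    ∀ k, k < n → Fc g (k+1) ≤ Fc f k := by
  intro k hk
  have h := hpre (2*k+1)
  rw [Wd_take_odd f g hk, List.count_append, List.count_append,
    (Wd_count f g k).1, (Wd_count f g k).2] at h
  have h3 := Fc_le f k
  have h4 := Fc_le g k
  have h6 := Fc_succ g k
  by_cases hg : g k <;> simp [hg] at h6 h <;> omega

lemma Wd_count_eq_iff {n : ℕ} :
    (Wd f g n).count U = (Wd f g n).count D ↔ Fc f n = Fc g n := by
  have h1 := (Wd_count f g n).1
  have h2 := (Wd_count f g n).2
  have h3 := Fc_le f n
  have h4 := Fc_le g n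
  omega

end Words

section PartC
open List DyckStep Finset

/-- membership function -/
def mf (I : Finset (Fin n)) (t : ℕ) : Bool := decide (∃ h : t < n, (⟨t, h⟩ : Fin n) ∈ I)

lemma mf_spec (I : Finset (Fin n)) {t : ℕ} (h : t < n) :
    mf I t = ((⟨t, h⟩ : Fin n) ∈ I) := by
  simp [mf, h]

lemma mf_spec' (I : Finset (Fin n)) {t : ℕ} (h : ¬ t < n) : mf I t = false := by
  simp [mf, h]

lemma Fc_mf (I : Finset (Fin n)) (k : ℕ) :
    Fc (mf I) k = (I.filter (fun y => y.val < k)).card := by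
  induction k with
  | zero =>
    have : I.filter (fun y => y.val < 0) = ∅ := by
      apply Finset.filter_false_of_mem; intro x _; omega
    rw [this]
    simpa using Nat.le_zero.1 (Fc_le (mf I) 0)
  | succ k ih =>
    rw [Fc_succ, ih]
    by_cases hk : k < n
    · by_cases hm : (⟨k, hk⟩ : Fin n) ∈ I
      · have he : I.filter (fun y => y.val < k + 1) =
            insert ⟨k, hk⟩ (I.filter (fun y => y.val < k)) := by
          ext y
          simp only [Finset.mem_filter, Finset.mem_insert]
          constructor
          · rintro ⟨hy, hlt⟩
            rcases Nat.lt_or_ge y.val k with h' | h'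
            · exact Or.inr ⟨hy, h'⟩
            · exact Or.inl (Fin.ext (by simp only [Fin.val_mk]; omega))
          · rintro (rfl | ⟨hy, hlt⟩)
            · exact ⟨hm, by simp only [Fin.val_mk]; omega⟩
            · exact ⟨hy, by omega⟩
        rw [he, Finset.card_insert_of_notMem (by simp)]
        simp only [mf_spec I hk, hm]
        simp
      · have he : I.filter (fun y => y.val < k + 1) = I.filter (fun y => y.val < k) := by
          ext y
          simp only [Finset.mem_filter]
          constructor
          · rintro ⟨hy, hlt⟩
            refine ⟨hy, ?_⟩
            rcases Nat.lt_or_ge y.val k with h' | h'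
            · exact h'
            · have hyk : y = ⟨k, hk⟩ := Fin.ext (by simp only [Fin.val_mk]; omega)
              exact absurd (hyk ▸ hy) hm
          · rintro ⟨hy, hlt⟩
            exact ⟨hy, by omega⟩
        rw [he]
        simp only [mf_spec I hk, hm]
        simp
    · rw [mf_spec' I hk]
      have he : I.filter (fun y => y.val < k + 1) = I.filter (fun y => y.val < k) := by
        ext y
        have := y.isLt
        simp only [Finset.mem_filter]
        constructor <;> rintro ⟨hy, _⟩ <;> exact ⟨hy, by omega⟩
      rw [he]
      simp

lemma dom_iff (I V : Finset (Fin n)) : Dom I V ↔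
    (Fc (mf I) n = Fc (mf V) n ∧ ∀ k, k < n → Fc (mf V) (k+1) ≤ Fc (mf I) k) := by
  have hI : Fc (mf I) n = I.card := by
    rw [Fc_mf]
    congr 1
    apply Finset.filter_true_of_mem
    intro x _
    exact x.isLt
  have hV : Fc (mf V) n = V.card := by
    rw [Fc_mf]
    congr 1
    apply Finset.filter_true_of_mem
    intro x _
    exact x.isLt
  constructor
  · rintro ⟨h1, h2⟩
    refine ⟨by rw [hI, hV, h1], fun k hk => ?_⟩
    have := h2 ⟨k, hk⟩
    rw [Fc_mf, Fc_mf]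
    have e1 : V.filter (fun y => y.val < k + 1) = V.filter (fun y => y ≤ (⟨k, hk⟩ : Fin n)) := by
      refine Finset.filter_congr fun y _ => ?_
      rw [Fin.le_def]
      constructor <;> intro hy <;> simp_all <;> omega
    have e2 : I.filter (fun y => y.val < k) = I.filter (fun y => y < (⟨k, hk⟩ : Fin n)) := by
      refine Finset.filter_congr fun y _ => ?_
      rw [Fin.lt_def]
    rw [e1, e2]
    exact this
  · rintro ⟨h1, h2⟩
    refine ⟨by rw [← hI, ← hV, h1], fun t => ?_⟩
    have := h2 t.val t.isLt
    rw [Fc_mf, Fc_mf] at this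
    have e1 : V.filter (fun y => y.val < t.val + 1) = V.filter (fun y => y ≤ t) := by
      refine Finset.filter_congr fun y _ => ?_
      rw [Fin.le_def]
      constructor <;> intro hy <;> simp_all <;> omega
    have e2 : I.filter (fun y => y.val < t.val) = I.filter (fun y => y < t) := by
      refine Finset.filter_congr fun y _ => ?_
      rw [Fin.lt_def]
    rw [e1, e2] at this
    exact this

/-- Dyck word from a pair -/
noncomputable def pairToDyck (I V : Finset (Fin n)) (hdom : Dom I V) : DyckWord where
  toList := Wd (mf I) (mf V) n
  count_U_eq_count_D := (Wd_count_eq_iff _ _).2 ((dom_iff I V).1 hdom).1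
  count_D_le_count_U := Wd_dyck_counts _ _ ((dom_iff I V).1 hdom).1 ((dom_iff I V).1 hdom).2

lemma pairToDyck_semilength (I V : Finset (Fin n)) (hdom : Dom I V) :
    (pairToDyck I V hdom).semilength = n := by
  have h1 := (Wd_count (mf I) (mf V) n).1
  have h2 := Fc_le (mf I) n
  have h3 := Fc_le (mf V) n
  have h4 := ((dom_iff I V).1 hdom).1
  show (Wd (mf I) (mf V) n).count U = n
  omega

/-- pair from a Dyck word -/
def dyckPairI (p : DyckWord) : Finset (Fin n) :=
  univ.filter fun t : Fin n => p.toList.getD (2*t.val+1) D = U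
def dyckPairV (p : DyckWord) : Finset (Fin n) :=
  univ.filter fun t : Fin n => p.toList.getD (2*t.val) U = D

lemma dyck_eq_Wd (p : DyckWord) (hp : p.semilength = n) :
    Wd (mf (dyckPairI (n := n) p)) (mf (dyckPairV (n := n) p)) n = p.toList := by
  have hlen : p.toList.length = 2*n := by rw [← p.two_mul_semilength_eq_length, hp]
  apply List.ext_getElem (by rw [Wd_length]; omega)
  intro i h1 h2
  have hi : i < 2*n := by rwa [hlen] at h2
  obtain ⟨t, ht, hcase⟩ : ∃ t, t < n ∧ (i = 2*t ∨ i = 2*t+1) := ⟨i/2, by omega, by omega⟩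
  rcases hcase with rfl | rfl
  · rw [← List.getD_eq_getElem (Wd _ _ n) U h1, ← List.getD_eq_getElem p.toList U h2]
    rw [Wd_getD_even _ _ ht]
    simp only [mf_spec _ ht, dyckPairV, Finset.mem_filter, Finset.mem_univ, true_and]
    rcases (p.toList.getD (2*t) U).dichotomy with hD | hD <;> rw [hD] <;> simp [hD]
  · rw [← List.getD_eq_getElem (Wd _ _ n) D h1, ← List.getD_eq_getElem p.toList D h2]
    rw [Wd_getD_odd _ _ ht]
    simp only [mf_spec _ ht, dyckPairI, Finset.mem_filter, Finset.mem_univ, true_and]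
    rcases (p.toList.getD (2*t+1) D).dichotomy with hD | hD <;> rw [hD] <;> simp [hD]

lemma dyck_dom (p : DyckWord) (hp : p.semilength = n) :
    Dom (dyckPairI (n := n) p) (dyckPairV (n := n) p) := by
  rw [dom_iff]
  constructor
  · apply (Wd_count_eq_iff _ _).1
    rw [dyck_eq_Wd p hp]
    exact p.count_U_eq_count_D
  · apply Wd_dyck_counts_rev
    intro i
    rw [dyck_eq_Wd p hp]
    exact p.count_D_le_count_U i

/-- the equivalence between dominated pairs and Dyck words of semilength n -/
noncomputable def pairDyckEquiv : {q : Finset (Fin n) × Finset (Fin n) // Dom q.1 q.2} ≃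
    {p : DyckWord // p.semilength = n} where
  toFun q := ⟨pairToDyck q.1.1 q.1.2 q.2, pairToDyck_semilength _ _ _⟩
  invFun p := ⟨(dyckPairI (n := n) p.1, dyckPairV (n := n) p.1), dyck_dom p.1 p.2⟩
  left_inv := by
    rintro ⟨⟨I, V⟩, hdom⟩
    apply Subtype.ext
    simp only
    rw [Prod.mk.injEq]
    constructor
    · ext t
      simp only [dyckPairI, Finset.mem_filter, Finset.mem_univ, true_and]
      change (Wd (mf I) (mf V) n).getD (2 * t.val + 1) D = U ↔ t ∈ I
      rw [Wd_getD_odd _ _ t.isLt]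
      simp only [mf_spec I t.isLt]
      by_cases hm : (⟨t.val, t.isLt⟩ : Fin n) ∈ I
      · simpa [hm] using hm
      · simpa [hm] using hm
    · ext t
      simp only [dyckPairV, Finset.mem_filter, Finset.mem_univ, true_and]
      change (Wd (mf I) (mf V) n).getD (2 * t.val) U = D ↔ t ∈ V
      rw [Wd_getD_even _ _ t.isLt]
      simp only [mf_spec V t.isLt]
      by_cases hm : (⟨t.val, t.isLt⟩ : Fin n) ∈ V
      · simpa [hm] using hm
      · simpa [hm] using hm
  right_inv := by
    rintro ⟨p, hp⟩
    apply Subtype.ext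
    apply DyckWord.ext
    exact dyck_eq_Wd p hp


end PartC

section PartDE
open Finset

def deltaFun (i : ℕ) (h2 : i < n) (a : Fin n) : Fin n :=
  if h : a.val < i then ⟨i-1-a.val, by omega⟩
  else ⟨n+i-1-a.val, by have := a.isLt; omega⟩

lemma delta_invol (i : ℕ) (h2 : i < n) : Function.Involutive (deltaFun i h2) := by
  intro a
  unfold deltaFun
  by_cases h : a.val < i
  · rw [dif_pos h, dif_pos (show i - 1 - a.val < i by omega)]
    exact Fin.ext (by simp only [Fin.val_mk]; omega)
  · have ha := a.isLt
    rw [dif_neg h, dif_neg (show ¬ (n + i - 1 - a.val < i) by omega)]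
    exact Fin.ext (by simp only [Fin.val_mk]; omega)

def delta (i : ℕ) (h2 : i < n) : Equiv.Perm (Fin n) := (delta_invol i h2).toPerm

lemma delta_apply (i : ℕ) (h2 : i < n) (a : Fin n) : delta i h2 a = deltaFun i h2 a := rfl

lemma delta_val_lt (i : ℕ) (h2 : i < n) {a : Fin n} (h : a.val < i) :
    (delta i h2 a).val = i - 1 - a.val := by
  rw [delta_apply, deltaFun, dif_pos h]

lemma delta_val_ge (i : ℕ) (h2 : i < n) {a : Fin n} (h : ¬ a.val < i) :
    (delta i h2 a).val = n + i - 1 - a.val := by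
  rw [delta_apply, deltaFun, dif_neg h]

lemma delta_inv_prop (i : ℕ) (h2 : i < n) (a : Fin n) :
    a.val < i ↔ (delta i h2 a).val < i := by
  by_cases h : a.val < i
  · rw [delta_val_lt i h2 h]; constructor <;> intro <;> omega
  · rw [delta_val_ge i h2 h]; have := a.isLt; constructor <;> intro <;> omega

lemma dec_delta (i : ℕ) (h1 : 0 < i) (h2 : i < n) : Dec (delta i h2) :=
  ⟨i, h1, h2, delta_inv_prop i h2⟩

lemma av_delta (i : ℕ) (h2 : i < n) : Av123 (delta i h2) := by
  rintro ⟨a, b, c, hab, hbc, hv1, hv2⟩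
  rw [Fin.lt_def] at hab hbc hv1 hv2
  by_cases hb : b.val < i
  · have ha : a.val < i := by omega
    rw [delta_val_lt i h2 ha, delta_val_lt i h2 hb] at hv1
    omega
  · have hc : ¬ c.val < i := by omega
    have hcn := c.isLt
    rw [delta_val_ge i h2 hb, delta_val_ge i h2 hc] at hv2
    omega

lemma perm_image_compl (σ : Equiv.Perm (Fin n)) (s : Finset (Fin n)) :
    sᶜ.image σ = (s.image σ)ᶜ := by
  ext y
  simp only [mem_image, mem_compl]
  constructor
  · rintro ⟨x, hx, rfl⟩ ⟨z, hz, he⟩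
    exact hx (σ.injective he ▸ hz)
  · intro hy
    refine ⟨σ.symm y, fun hm => hy ⟨σ.symm y, hm, by simp⟩, by simp⟩

/-- blocks are preserved -/
lemma block_image {σ : Equiv.Perm (Fin n)} {i : ℕ}
    (hinv : ∀ a : Fin n, a.val < i ↔ (σ a).val < i) :
    (univ.filter fun a : Fin n => a.val < i).image σ = univ.filter fun a : Fin n => a.val < i := by
  apply Finset.eq_of_subset_of_card_le
  · intro y hy
    obtain ⟨x, hx, rfl⟩ := mem_image.1 hy
    exact mem_filter.2 ⟨mem_univ _, (hinv x).1 (mem_filter.1 hx).2⟩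
  · rw [Finset.card_image_of_injective _ σ.injective]

/-- classification of decomposable 123-avoiding permutations -/
lemma dec_av_eq_delta {π : Equiv.Perm (Fin n)} {i : ℕ} (h1 : 0 < i) (h2 : i < n)
    (hinv : ∀ a : Fin n, a.val < i ↔ (π a).val < i) (hav : Av123 π) :
    π = delta i h2 := by
  set B1 : Finset (Fin n) := univ.filter fun a : Fin n => a.val < i with hB1
  have hanti1 : StrictAntiOn π B1 := by
    intro a ha b hb hab
    simp only [hB1, coe_filter, Set.mem_setOf_eq, mem_univ, true_and] at ha hb
    rcases lt_trichotomy (π b) (π a) with h | h | h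
    · exact h
    · exact absurd (π.injective h.symm) hab.ne
    · exfalso
      refine hav ⟨a, b, ⟨i, h2⟩, hab, ?_, h, ?_⟩
      · rw [Fin.lt_def]; exact hb
      · rw [Fin.lt_def]
        have hπb := (hinv b).1 hb
        have hπc : ¬ ((π ⟨i, h2⟩).val < i) := by
          rw [← hinv ⟨i, h2⟩]; simp
        omega
  have hanti2 : StrictAntiOn π (B1ᶜ : Finset (Fin n)) := by
    intro a ha b hb hab
    simp only [hB1, Finset.mem_coe, Finset.mem_compl, mem_filter, mem_univ, true_and,
      not_lt] at ha hb
    rcases lt_trichotomy (π b) (π a) with h | h | h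
    · exact h
    · exact absurd (π.injective h.symm) hab.ne
    · exfalso
      refine hav ⟨⟨i-1, by omega⟩, a, b, ?_, hab, ?_, h⟩
      · rw [Fin.lt_def]; simp only [Fin.val_mk]; omega
      · rw [Fin.lt_def]
        have hπa : ¬ ((π a).val < i) := by rw [← hinv a]; omega
        have hπc : (π ⟨i-1, by omega⟩).val < i := by
          rw [← hinv ⟨i-1, by omega⟩]; simp only [Fin.val_mk]; omega
        omega
  have hd1 : StrictAntiOn (delta i h2) B1 := by
    intro a ha b hb hab
    simp only [hB1, coe_filter, Set.mem_setOf_eq, mem_univ, true_and] at ha hb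
    rw [Fin.lt_def, delta_val_lt i h2 ha, delta_val_lt i h2 hb]
    rw [Fin.lt_def] at hab
    omega
  have hd2 : StrictAntiOn (delta i h2) (B1ᶜ : Finset (Fin n)) := by
    intro a ha b hb hab
    simp only [hB1, Finset.mem_coe, Finset.mem_compl, mem_filter, mem_univ, true_and,
      not_lt] at ha hb
    have hbn := b.isLt
    rw [Fin.lt_def, delta_val_ge i h2 (by omega), delta_val_ge i h2 (by omega)]
    rw [Fin.lt_def] at hab
    omega
  have him1 : B1.image π = B1 := block_image hinv
  have him1' : B1.image (delta i h2) = B1 := block_image (delta_inv_prop i h2)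
  have him2 : (B1ᶜ : Finset (Fin n)).image π = B1ᶜ := by
    rw [perm_image_compl, him1]
  have him2' : (B1ᶜ : Finset (Fin n)).image (delta i h2) = B1ᶜ := by
    rw [perm_image_compl, him1']
  have hu1 := strictAntiOn_unique hanti1 hd1 him1 him1'
  have hu2 := strictAntiOn_unique hanti2 hd2 him2 him2'
  apply Equiv.ext
  intro x
  by_cases h : x ∈ B1
  · exact hu1 x h
  · exact hu2 x (Finset.mem_compl.2 h)


/-- reversal: 123-avoiding iff the reverse avoids 321 -/
lemma av123_iff_rev (π : Equiv.Perm (Fin n)) : Av123 π ↔ Av321 (π * Fin.revPerm) := by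
  constructor
  · rintro h ⟨a, b, c, hab, hbc, h1, h2⟩
    exact h ⟨c.rev, b.rev, a.rev, Fin.rev_lt_rev.2 hbc, Fin.rev_lt_rev.2 hab, h2, h1⟩
  · rintro h ⟨a, b, c, hab, hbc, h1, h2⟩
    refine h ⟨c.rev, b.rev, a.rev, Fin.rev_lt_rev.2 hbc, Fin.rev_lt_rev.2 hab, ?_, ?_⟩
    · show π (b.rev.rev) < π (c.rev.rev)
      rw [Fin.rev_rev, Fin.rev_rev]
      exact h2
    · show π (a.rev.rev) < π (b.rev.rev)
      rw [Fin.rev_rev, Fin.rev_rev]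
      exact h1
  
/-- the 123-avoiders are counted by Catalan numbers -/
lemma card_av123 : Nat.card {π : Equiv.Perm (Fin n) // Av123 π} = catalan n := by
  have e1 : {π : Equiv.Perm (Fin n) // Av123 π} ≃ {ρ : Equiv.Perm (Fin n) // Av321 ρ} :=
    (Equiv.mulRight Fin.revPerm).subtypeEquiv (fun π => by
      rw [av123_iff_rev π]; rfl)
  rw [Nat.card_congr (((e1.trans permPairEquiv).trans pairDyckEquiv)),
    Nat.card_eq_fintype_card, DyckWord.card_dyckWord_semilength_eq_catalan]

/-- decomposable 123-avoiders are counted by n - 1 -/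
lemma card_dec_av123 (hn : 0 < n) :
    Nat.card {π : Equiv.Perm (Fin n) // Dec π ∧ Av123 π} = n - 1 := by
  have key : ∀ (π : Equiv.Perm (Fin n)), Dec π → Av123 π →
      ∀ (j : ℕ) (hj : j < n), (π ⟨0, hn⟩).val + 1 = j → π = delta j hj := by
    intro π hdec hav j hj hval
    obtain ⟨i, h1, h2, hinv⟩ := hdec
    have hπ := dec_av_eq_delta h1 h2 hinv hav
    have hval2 : (π ⟨0, hn⟩).val + 1 = i := by
      rw [hπ, delta_val_lt i h2 (show (⟨0, hn⟩ : Fin n).val < i from h1)]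
      simp only [Fin.val_mk]
      omega
    have : j = i := by omega
    subst this
    exact hπ
  have e : {π : Equiv.Perm (Fin n) // Dec π ∧ Av123 π} ≃ {i : ℕ // 0 < i ∧ i < n} := by
    refine ⟨fun π => ⟨(π.1 ⟨0, hn⟩).val + 1, ?_, ?_⟩, fun i => ⟨delta i.1 i.2.2,
      dec_delta i.1 i.2.1 i.2.2, av_delta i.1 i.2.2⟩, ?_, ?_⟩
    · omega
    · obtain ⟨i, h1, h2, hinv⟩ := π.2.1
      have hπ := dec_av_eq_delta h1 h2 hinv π.2.2
      have hval2 : (π.1 ⟨0, hn⟩).val + 1 = i := by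
        rw [hπ, delta_val_lt i h2 (show (⟨0, hn⟩ : Fin n).val < i from h1)]
        simp only [Fin.val_mk]
        omega
      omega
    · rintro ⟨π, hdec, hav⟩
      exact Subtype.ext (key π hdec hav _ _ rfl).symm
    · rintro ⟨i, h1, h2⟩
      apply Subtype.ext
      show (delta i h2 ⟨0, hn⟩).val + 1 = i
      rw [delta_val_lt i h2 (show (⟨0, hn⟩ : Fin n).val < i from h1)]
      simp only [Fin.val_mk]
      omega
  rw [Nat.card_congr e]
  rw [Nat.card_congr (⟨fun i => (⟨i.1 - 1, by omega⟩ : Fin (n-1)), fun j => ⟨j.1 + 1, by omega,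
    by have := j.isLt; omega⟩, fun i => Subtype.ext (by have := i.2.1; simp; omega),
    fun j => Fin.ext (by simp)⟩ : {i : ℕ // 0 < i ∧ i < n} ≃ Fin (n-1))]
  simp


lemma final (hn : 1 ≤ n) :
    Nat.card {π : Equiv.Perm (Fin n) // ¬ Dec π ∧ Av123 π} = catalan n - (n - 1) := by
  classical
  have e0 : {π : Equiv.Perm (Fin n) // Av123 π} ≃
      {π : Equiv.Perm (Fin n) // Dec π ∧ Av123 π} ⊕
      {π : Equiv.Perm (Fin n) // ¬ Dec π ∧ Av123 π} := by
    refine (Equiv.sumCompl (p := fun x : {π : Equiv.Perm (Fin n) // Av123 π} =>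
      Dec x.1)).symm.trans (Equiv.sumCongr ?_ ?_)
    · exact (Equiv.subtypeSubtypeEquivSubtypeInter Av123 Dec).trans
        (Equiv.subtypeEquivRight (fun π => and_comm))
    · exact (Equiv.subtypeSubtypeEquivSubtypeInter Av123 (fun π => ¬ Dec π)).trans
        (Equiv.subtypeEquivRight (fun π => and_comm))
  have hsum := Nat.card_congr e0
  rw [Nat.card_sum, card_av123, card_dec_av123 (by omega)] at hsum
  omega

end PartDE
end Stmt1

/-- For n ≥ 1, the number of indecomposable 123-avoiding permutations
of {1,...,n} is Cₙ - (n-1). -/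
theorem stmt1 (n : ℕ) (hn : 1 ≤ n) :
    Nat.card {π : Equiv.Perm (Fin n) //
      (¬ ∃ i : ℕ, 0 < i ∧ i < n ∧ ∀ a : Fin n, a.val < i ↔ (π a).val < i) ∧
      ¬ ∃ a b c : Fin n, a < b ∧ b < c ∧ π a < π b ∧ π b < π c} =
    catalan n - (n - 1) := Stmt1.final hn
end

section
/- For every n ≥ 2, the number of indecomposable permutations of {1,...,n} that avoid the pattern 132 equals C_n − C_{n−1}, where C_n is the n-th Catalan number. -/
set_option maxHeartbeats 1000000
open Equiv

def Av {n : ℕ} (π : Equiv.Perm (Fin n)) : Prop :=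
  ¬ ∃ a b c : Fin n, a < b ∧ b < c ∧ π a < π c ∧ π c < π b

def Decomp {n : ℕ} (π : Equiv.Perm (Fin n)) : Prop :=
  ∃ i : ℕ, 0 < i ∧ i < n ∧ ∀ a : Fin n, a.val < i ↔ (π a).val < i

section Glue
variable (n k : ℕ) (hk : k ≤ n) (σ : Equiv.Perm (Fin k)) (τ : Equiv.Perm (Fin (n - k)))

def gf (i : Fin (n + 1)) : Fin (n + 1) :=
  if h : i.val < k then ⟨(n - k) + (σ ⟨i.val, h⟩).val, by have := (σ ⟨i.val, h⟩).isLt; omega⟩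
  else if h2 : i.val = k then ⟨n, by omega⟩
  else ⟨(τ ⟨i.val - k - 1, by have := i.isLt; omega⟩).val,
    by have := (τ ⟨i.val - k - 1, by have := i.isLt; omega⟩).isLt; omega⟩

def gi (j : Fin (n + 1)) : Fin (n + 1) :=
  if h : j.val < n - k then ⟨k + 1 + (τ.symm ⟨j.val, h⟩).val,
    by have := (τ.symm ⟨j.val, h⟩).isLt; omega⟩
  else if h2 : j.val < n then ⟨(σ.symm ⟨j.val - (n - k), by omega⟩).val,
    by have := (σ.symm ⟨j.val - (n - k), by omega⟩).isLt; omega⟩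
  else ⟨k, by omega⟩

theorem gf_lt (i : Fin (n + 1)) (h : i.val < k) :
    (gf n k hk σ τ i).val = (n - k) + (σ ⟨i.val, h⟩).val := by
  rw [gf, dif_pos h]

theorem gf_eq (i : Fin (n + 1)) (h : i.val = k) : (gf n k hk σ τ i).val = n := by
  rw [gf, dif_neg (by omega), dif_pos h]

theorem gf_gt (i : Fin (n + 1)) (h : k < i.val) :
    (gf n k hk σ τ i).val = (τ ⟨i.val - k - 1, by have := i.isLt; omega⟩).val := by
  rw [gf, dif_neg (by omega), dif_neg (by omega)]

theorem gi_gf (i : Fin (n + 1)) : gi n k hk σ τ (gf n k hk σ τ i) = i := by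
  rcases Nat.lt_trichotomy i.val k with h | h | h
  · have hv := gf_lt n k hk σ τ i h
    have hσ := (σ ⟨i.val, h⟩).isLt
    apply Fin.ext
    rw [gi, dif_neg (by omega), dif_pos (by omega : (gf n k hk σ τ i).val < n)]
    have he : (⟨(gf n k hk σ τ i).val - (n - k), by omega⟩ : Fin k) = σ ⟨i.val, h⟩ := by
      apply Fin.ext; simp only [hv]; omega
    simp only [he, Equiv.symm_apply_apply]
  · have hv := gf_eq n k hk σ τ i h
    apply Fin.ext
    rw [gi, dif_neg (by omega), dif_neg (by omega)]
    simp only [Fin.val_mk]; omega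
  · have hv := gf_gt n k hk σ τ i h
    have hτ := (τ ⟨i.val - k - 1, by have := i.isLt; omega⟩).isLt
    apply Fin.ext
    rw [gi, dif_pos (by omega : (gf n k hk σ τ i).val < n - k)]
    have he : (⟨(gf n k hk σ τ i).val, by omega⟩ : Fin (n - k))
        = τ ⟨i.val - k - 1, by have := i.isLt; omega⟩ := by apply Fin.ext; simp only [hv]
    simp only [he, Equiv.symm_apply_apply]; omega

theorem gf_gi (j : Fin (n + 1)) : gf n k hk σ τ (gi n k hk σ τ j) = j := by
  rcases Nat.lt_trichotomy j.val (n - k) with h | h | h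
  · have hs := (τ.symm ⟨j.val, h⟩).isLt
    have hv : (gi n k hk σ τ j).val = k + 1 + (τ.symm ⟨j.val, h⟩).val := by
      rw [gi, dif_pos h]
    apply Fin.ext
    rw [gf_gt n k hk σ τ _ (by omega)]
    have he : (⟨(gi n k hk σ τ j).val - k - 1, by have := (gi n k hk σ τ j).isLt; omega⟩ :
        Fin (n - k)) = τ.symm ⟨j.val, h⟩ := by apply Fin.ext; simp only [hv]; omega
    rw [he, Equiv.apply_symm_apply]
  · by_cases hn : j.val < n
    · have hs := (σ.symm ⟨j.val - (n - k), by omega⟩).isLt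
      have hv : (gi n k hk σ τ j).val = (σ.symm ⟨j.val - (n - k), by omega⟩).val := by
        rw [gi, dif_neg (by omega), dif_pos hn]
      apply Fin.ext
      rw [gf_lt n k hk σ τ _ (by omega)]
      have he : (⟨(gi n k hk σ τ j).val, by omega⟩ : Fin k)
          = σ.symm ⟨j.val - (n - k), by omega⟩ := by apply Fin.ext; simp only [hv]
      rw [he, Equiv.apply_symm_apply]; simp only [Fin.val_mk]; omega
    · have hjn : j.val = n := by have := j.isLt; omega
      have hv : (gi n k hk σ τ j).val = k := by rw [gi, dif_neg (by omega), dif_neg (by omega)]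
      apply Fin.ext
      rw [gf_eq n k hk σ τ _ hv, hjn]
  · by_cases hn : j.val < n
    · have hs := (σ.symm ⟨j.val - (n - k), by omega⟩).isLt
      have hv : (gi n k hk σ τ j).val = (σ.symm ⟨j.val - (n - k), by omega⟩).val := by
        rw [gi, dif_neg (by omega), dif_pos hn]
      apply Fin.ext
      rw [gf_lt n k hk σ τ _ (by omega)]
      have he : (⟨(gi n k hk σ τ j).val, by omega⟩ : Fin k)
          = σ.symm ⟨j.val - (n - k), by omega⟩ := by apply Fin.ext; simp only [hv]
      rw [he, Equiv.apply_symm_apply]; simp only [Fin.val_mk]; omega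
    · have hjn : j.val = n := by have := j.isLt; omega
      have hv : (gi n k hk σ τ j).val = k := by rw [gi, dif_neg (by omega), dif_neg (by omega)]
      apply Fin.ext
      rw [gf_eq n k hk σ τ _ hv, hjn]

def glue : Equiv.Perm (Fin (n + 1)) :=
  ⟨gf n k hk σ τ, gi n k hk σ τ, gi_gf n k hk σ τ, gf_gi n k hk σ τ⟩

theorem glue_lt (i : Fin (n + 1)) (h : i.val < k) :
    (glue n k hk σ τ i).val = (n - k) + (σ ⟨i.val, h⟩).val := gf_lt n k hk σ τ i h

theorem glue_eq (i : Fin (n + 1)) (h : i.val = k) : (glue n k hk σ τ i).val = n :=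
  gf_eq n k hk σ τ i h

theorem glue_gt (i : Fin (n + 1)) (h : k < i.val) :
    (glue n k hk σ τ i).val = (τ ⟨i.val - k - 1, by have := i.isLt; omega⟩).val :=
  gf_gt n k hk σ τ i h

/-- Convenient value-range facts. -/
theorem glue_lt_range (i : Fin (n + 1)) (h : i.val < k) :
    (n - k) ≤ (glue n k hk σ τ i).val ∧ (glue n k hk σ τ i).val < n := by
  rw [glue_lt n k hk σ τ i h]
  have := (σ ⟨i.val, h⟩).isLt; omega

theorem glue_gt_range (i : Fin (n + 1)) (h : k < i.val) :
    (glue n k hk σ τ i).val < n - k := by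
  rw [glue_gt n k hk σ τ i h]
  exact (τ ⟨i.val - k - 1, by have := i.isLt; omega⟩).isLt


theorem glue_gt' (j : Fin (n - k)) :
    (glue n k hk σ τ ⟨k + 1 + j.val, by have := j.isLt; omega⟩).val = (τ j).val := by
  rw [glue_gt n k hk σ τ ⟨k + 1 + j.val, by have := j.isLt; omega⟩
    (by simp only [Fin.val_mk]; omega)]
  have e : (⟨k + 1 + j.val - k - 1, by have := j.isLt; omega⟩ : Fin (n - k)) = j := by
    apply Fin.ext; simp only [Fin.val_mk]; omega
  rw [e]

theorem av_glue : Av (glue n k hk σ τ) ↔ Av σ ∧ Av τ := by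
  constructor
  · intro hg
    constructor
    · rintro ⟨a, b, c, hab, hbc, h1, h2⟩
      apply hg
      refine ⟨⟨a.val, by omega⟩, ⟨b.val, by omega⟩, ⟨c.val, by omega⟩, ?_, ?_, ?_, ?_⟩ <;>
        rw [Fin.lt_def]
      · exact hab
      · exact hbc
      · rw [glue_lt n k hk σ τ ⟨a.val, by omega⟩ a.isLt, glue_lt n k hk σ τ ⟨c.val, by omega⟩ c.isLt]
        have h1' : (σ a).val < (σ c).val := h1
        simp only [Fin.eta]; omega
      · rw [glue_lt n k hk σ τ ⟨c.val, by omega⟩ c.isLt, glue_lt n k hk σ τ ⟨b.val, by omega⟩ b.isLt]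
        have h2' : (σ c).val < (σ b).val := h2
        simp only [Fin.eta]; omega
    · rintro ⟨a, b, c, hab, hbc, h1, h2⟩
      apply hg
      have ha := a.isLt
      have hb := b.isLt
      have hc := c.isLt
      have hab' : a.val < b.val := hab
      have hbc' : b.val < c.val := hbc
      have h1' : (τ a).val < (τ c).val := h1
      have h2' : (τ c).val < (τ b).val := h2
      refine ⟨⟨k + 1 + a.val, by omega⟩, ⟨k + 1 + b.val, by omega⟩, ⟨k + 1 + c.val, by omega⟩,
        ?_, ?_, ?_, ?_⟩ <;> rw [Fin.lt_def]
      · simp only [Fin.val_mk]; omega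
      · simp only [Fin.val_mk]; omega
      · rw [glue_gt' n k hk σ τ a, glue_gt' n k hk σ τ c]; exact h1'
      · rw [glue_gt' n k hk σ τ c, glue_gt' n k hk σ τ b]; exact h2'
  · rintro ⟨hσ, hτ⟩ ⟨a, b, c, hab, hbc, h1, h2⟩
    rw [Fin.lt_def] at hab hbc h1 h2
    rcases Nat.lt_trichotomy c.val k with hc | hc | hc
    · -- all three in first block
      have hb : b.val < k := by omega
      have ha : a.val < k := by omega
      apply hσ
      refine ⟨⟨a.val, ha⟩, ⟨b.val, hb⟩, ⟨c.val, hc⟩, ?_, ?_, ?_, ?_⟩ <;> rw [Fin.lt_def]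
      · exact hab
      · exact hbc
      · rw [glue_lt n k hk σ τ a ha, glue_lt n k hk σ τ c hc] at h1; omega
      · rw [glue_lt n k hk σ τ c hc, glue_lt n k hk σ τ b hb] at h2; omega
    · -- c at position k: glue c = n is maximal, contradicts h2
      have hb : b.val < k := by omega
      rw [glue_eq n k hk σ τ c hc] at h2
      have := (glue_lt_range n k hk σ τ b hb).2; omega
    · rcases Nat.lt_trichotomy b.val k with hb | hb | hb
      · -- a, b in first block, c in last: h1 contradiction
        have ha : a.val < k := by omega
        have := (glue_lt_range n k hk σ τ a ha).1
        have := glue_gt_range n k hk σ τ c hc; omega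
      · -- b at position k, a in first block
        have ha : a.val < k := by omega
        have := (glue_lt_range n k hk σ τ a ha).1
        have := glue_gt_range n k hk σ τ c hc; omega
      · rcases Nat.lt_trichotomy a.val k with ha | ha | ha
        · have := (glue_lt_range n k hk σ τ a ha).1
          have := glue_gt_range n k hk σ τ c hc; omega
        · rw [glue_eq n k hk σ τ a ha] at h1
          have := glue_gt_range n k hk σ τ c hc; omega
        · -- all three in last block
          apply hτ
          have hia := a.isLt
          have hib := b.isLt
          refine ⟨⟨a.val - k - 1, by omega⟩, ⟨b.val - k - 1, by omega⟩,
            ⟨c.val - k - 1, by have := c.isLt; omega⟩, ?_, ?_, ?_, ?_⟩ <;> rw [Fin.lt_def]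
          · simp only [Fin.val_mk]; omega
          · simp only [Fin.val_mk]; omega
          · rw [glue_gt n k hk σ τ a ha, glue_gt n k hk σ τ c hc] at h1; exact h1
          · rw [glue_gt n k hk σ τ c hc, glue_gt n k hk σ τ b hb] at h2; exact h2

end Glue
section Block
variable {n : ℕ} (π : Equiv.Perm (Fin (n + 1))) (k : ℕ) (hk : k ≤ n)

theorem block_T (hAv : Av π) (hπk : π ⟨k, by omega⟩ = Fin.last n) :
    ∀ i : Fin (n + 1), i.val ≤ k → n - k ≤ (π i).val := by
  classical
  set T : Finset (Fin (n + 1)) := Finset.univ.filter (fun i => n - k ≤ (π i).val) with hT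
  have hTcard : T.card = k + 1 := by
    have himg : T = Finset.image π.symm
        (Finset.univ.filter (fun v : Fin (n + 1) => n - k ≤ v.val)) := by
      ext i
      simp only [hT, Finset.mem_filter, Finset.mem_univ, true_and, Finset.mem_image]
      constructor
      · intro h; exact ⟨π i, h, Equiv.symm_apply_apply π i⟩
      · rintro ⟨v, hv, rfl⟩; rwa [Equiv.apply_symm_apply]
    rw [himg, Finset.card_image_of_injective _ π.symm.injective]
    have hfe : Finset.univ.filter (fun v : Fin (n + 1) => n - k ≤ v.val)
        = Finset.Ici (⟨n - k, by omega⟩ : Fin (n + 1)) := by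
      ext v
      simp only [Finset.mem_filter, Finset.mem_univ, true_and, Finset.mem_Ici, Fin.le_def]
    rw [hfe, Fin.card_Ici]
    simp only [Fin.val_mk]; omega
  intro i hik
  by_contra hcon
  push_neg at hcon
  have hik' : i.val < k := by
    rcases Nat.lt_or_ge i.val k with h | h
    · exact h
    · exfalso
      have : i = (⟨k, by omega⟩ : Fin (n + 1)) := Fin.ext (by simp only [Fin.val_mk]; omega)
      rw [this, hπk] at hcon
      simp only [Fin.val_last] at hcon; omega
  have hiT : i ∉ T := by
    simp only [hT, Finset.mem_filter, Finset.mem_univ, true_and]; omega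
  obtain ⟨c, hcT, hc⟩ : ∃ c ∈ T, c ∉ Finset.Iic (⟨k, by omega⟩ : Fin (n + 1)) := by
    rw [← Finset.not_subset]
    intro hsub
    have heq := Finset.eq_of_subset_of_card_le hsub
      (by rw [Fin.card_Iic]; simp only [Fin.val_mk]; omega)
    have : i ∈ T := by
      rw [heq]; simp only [Finset.mem_Iic, Fin.le_def, Fin.val_mk]; omega
    exact hiT this
  have hcval : k < c.val := by
    simp only [Finset.mem_Iic, Fin.le_def, Fin.val_mk] at hc; omega
  have hcT' : n - k ≤ (π c).val := by
    simp only [hT, Finset.mem_filter, Finset.mem_univ, true_and] at hcT; exact hcT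
  apply hAv
  refine ⟨i, ⟨k, by omega⟩, c, ?_, ?_, ?_, ?_⟩ <;> rw [Fin.lt_def]
  · simp only [Fin.val_mk]; omega
  · simp only [Fin.val_mk]; omega
  · omega
  · rw [hπk, Fin.val_last]
    have : π c ≠ Fin.last n := by
      intro h
      have : c = (⟨k, by omega⟩ : Fin (n + 1)) := π.injective (by rw [h, hπk])
      rw [this] at hcval; simp only [Fin.val_mk] at hcval; omega
    have := (π c).isLt
    have hne : (π c).val ≠ n := fun h => this.ne (by exact absurd (Fin.ext h) ‹π c ≠ Fin.last n›)
    omega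

theorem block_gt (hAv : Av π) (hπk : π ⟨k, by omega⟩ = Fin.last n) :
    ∀ i : Fin (n + 1), k < i.val → (π i).val < n - k := by
  classical
  intro i hik
  by_contra hcon
  push_neg at hcon
  set T : Finset (Fin (n + 1)) := Finset.univ.filter (fun j => n - k ≤ (π j).val) with hT
  have hTcard : T.card = k + 1 := by
    have himg : T = Finset.image π.symm
        (Finset.univ.filter (fun v : Fin (n + 1) => n - k ≤ v.val)) := by
      ext j
      simp only [hT, Finset.mem_filter, Finset.mem_univ, true_and, Finset.mem_image]
      constructor
      · intro h; exact ⟨π j, h, Equiv.symm_apply_apply π j⟩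
      · rintro ⟨v, hv, rfl⟩; rwa [Equiv.apply_symm_apply]
    rw [himg, Finset.card_image_of_injective _ π.symm.injective]
    have hfe : Finset.univ.filter (fun v : Fin (n + 1) => n - k ≤ v.val)
        = Finset.Ici (⟨n - k, by omega⟩ : Fin (n + 1)) := by
      ext v
      simp only [Finset.mem_filter, Finset.mem_univ, true_and, Finset.mem_Ici, Fin.le_def]
    rw [hfe, Fin.card_Ici]
    simp only [Fin.val_mk]; omega
  have hsub : Finset.Iic (⟨k, by omega⟩ : Fin (n + 1)) ⊆ T := by
    intro j hj
    simp only [Finset.mem_Iic, Fin.le_def, Fin.val_mk] at hj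
    simp only [hT, Finset.mem_filter, Finset.mem_univ, true_and]
    exact block_T π k hk hAv hπk j hj
  have heq := Finset.eq_of_subset_of_card_le hsub
    (by rw [Fin.card_Iic]; simp only [Fin.val_mk]; omega)
  have hiT : i ∈ T := by
    simp only [hT, Finset.mem_filter, Finset.mem_univ, true_and]; omega
  rw [← heq] at hiT
  simp only [Finset.mem_Iic, Fin.le_def, Fin.val_mk] at hiT
  omega

theorem block_lt_top (hπk : π ⟨k, by omega⟩ = Fin.last n) :
    ∀ i : Fin (n + 1), i.val < k → (π i).val < n := by
  intro i h
  have hne : π i ≠ Fin.last n := by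
    intro he
    have : i = (⟨k, by omega⟩ : Fin (n + 1)) := π.injective (by rw [he, hπk])
    rw [this] at h; simp only [Fin.val_mk] at h; omega
  have := (π i).isLt
  have : (π i).val ≠ n := fun hv => hne (Fin.ext hv)
  omega

end Block
section Unglue
variable (n k : ℕ) (hk : k ≤ n) (π : Equiv.Perm (Fin (n + 1)))

/-- Restriction of `π` to the first block, shifted down by `n - k`. -/
noncomputable def mkσ (hb : ∀ i : Fin (n + 1), i.val < k → n - k ≤ (π i).val ∧ (π i).val < n) :
    Equiv.Perm (Fin k) :=
  Equiv.ofBijective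
    (fun i : Fin k => (⟨(π ⟨i.val, by omega⟩).val - (n - k),
      by have := hb ⟨i.val, by omega⟩ i.isLt; omega⟩ : Fin k)) <| by
    rw [← Finite.injective_iff_bijective]
    intro a b h
    simp only [Fin.mk.injEq] at h
    have ha := hb ⟨a.val, by omega⟩ a.isLt
    have hb' := hb ⟨b.val, by omega⟩ b.isLt
    have hv : (π ⟨a.val, by omega⟩).val = (π ⟨b.val, by omega⟩).val := by omega
    have := π.injective (Fin.ext hv)
    simp only [Fin.mk.injEq] at this
    exact Fin.ext this

theorem mkσ_val (hb) (i : Fin k) :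
    ((mkσ n k hk π hb) i).val = (π ⟨i.val, by omega⟩).val - (n - k) := rfl

/-- Restriction of `π` to the last block. -/
noncomputable def mkτ (hb2 : ∀ i : Fin (n + 1), k < i.val → (π i).val < n - k) :
    Equiv.Perm (Fin (n - k)) :=
  Equiv.ofBijective
    (fun j : Fin (n - k) => (⟨(π ⟨k + 1 + j.val, by have := j.isLt; omega⟩).val,
      hb2 ⟨k + 1 + j.val, by have := j.isLt; omega⟩ (by simp only [Fin.val_mk]; omega)⟩ :
        Fin (n - k))) <| by
    rw [← Finite.injective_iff_bijective]
    intro a b h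
    simp only [Fin.mk.injEq] at h
    have := π.injective (Fin.ext h)
    simp only [Fin.mk.injEq] at this
    have ha := a.isLt
    exact Fin.ext (by omega)

theorem mkτ_val (hb2) (j : Fin (n - k)) :
    ((mkτ n k hk π hb2) j).val = (π ⟨k + 1 + j.val, by have := j.isLt; omega⟩).val := rfl

theorem glue_mk (hπk : π ⟨k, by omega⟩ = Fin.last n)
    (hb : ∀ i : Fin (n + 1), i.val < k → n - k ≤ (π i).val ∧ (π i).val < n)
    (hb2 : ∀ i : Fin (n + 1), k < i.val → (π i).val < n - k) :
    glue n k hk (mkσ n k hk π hb) (mkτ n k hk π hb2) = π := by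
  apply Equiv.ext
  intro i
  apply Fin.ext
  rcases Nat.lt_trichotomy i.val k with h | h | h
  · rw [glue_lt n k hk _ _ i h, mkσ_val]
    have hei : (⟨i.val, by omega⟩ : Fin (n + 1)) = i := Fin.ext rfl
    rw [hei]
    have := hb i h
    omega
  · rw [glue_eq n k hk _ _ i h]
    have hei : i = (⟨k, by omega⟩ : Fin (n + 1)) := Fin.ext (by simp only [Fin.val_mk]; omega)
    rw [hei, hπk, Fin.val_last]
  · rw [glue_gt n k hk _ _ i h, mkτ_val]
    have hei : (⟨k + 1 + (i.val - k - 1), by have := i.isLt; omega⟩ : Fin (n + 1)) = i :=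
      Fin.ext (by simp only [Fin.val_mk]; omega)
    rw [hei]

theorem mkσ_glue (σ : Equiv.Perm (Fin k)) (τ : Equiv.Perm (Fin (n - k))) (hb) :
    mkσ n k hk (glue n k hk σ τ) hb = σ := by
  apply Equiv.ext
  intro i
  apply Fin.ext
  rw [mkσ_val, glue_lt n k hk σ τ ⟨i.val, by omega⟩ i.isLt]
  have : (⟨(⟨i.val, by omega⟩ : Fin (n + 1)).val, i.isLt⟩ : Fin k) = i := Fin.ext rfl
  rw [this]
  omega

theorem mkτ_glue (σ : Equiv.Perm (Fin k)) (τ : Equiv.Perm (Fin (n - k))) (hb2) :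
    mkτ n k hk (glue n k hk σ τ) hb2 = τ := by
  apply Equiv.ext
  intro j
  apply Fin.ext
  rw [mkτ_val, glue_gt' n k hk σ τ j]

end Unglue

noncomputable def fiberEquiv (n k : ℕ) (hk : k ≤ n) :
    {π : Equiv.Perm (Fin (n + 1)) // Av π ∧ π ⟨k, by omega⟩ = Fin.last n} ≃
      {σ : Equiv.Perm (Fin k) // Av σ} × {τ : Equiv.Perm (Fin (n - k)) // Av τ} where
  toFun p :=
    have hb : ∀ i : Fin (n + 1), i.val < k → n - k ≤ (p.1 i).val ∧ (p.1 i).val < n :=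
      fun i h => ⟨block_T p.1 k hk p.2.1 p.2.2 i (le_of_lt h), block_lt_top p.1 k hk p.2.2 i h⟩
    have hb2 := block_gt p.1 k hk p.2.1 p.2.2
    have hg : Av (glue n k hk (mkσ n k hk p.1 hb) (mkτ n k hk p.1 hb2)) := by
      rw [glue_mk n k hk p.1 p.2.2 hb hb2]; exact p.2.1
    have hστ := (av_glue n k hk _ _).mp hg
    (⟨mkσ n k hk p.1 hb, hστ.1⟩, ⟨mkτ n k hk p.1 hb2, hστ.2⟩)
  invFun q :=
    ⟨glue n k hk q.1.1 q.2.1, (av_glue n k hk q.1.1 q.2.1).mpr ⟨q.1.2, q.2.2⟩,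
      Fin.ext (by rw [glue_eq n k hk q.1.1 q.2.1 ⟨k, by omega⟩ rfl, Fin.val_last])⟩
  left_inv p := by
    apply Subtype.ext
    exact glue_mk n k hk p.1 p.2.2
      (fun i h => ⟨block_T p.1 k hk p.2.1 p.2.2 i (le_of_lt h), block_lt_top p.1 k hk p.2.2 i h⟩)
      (block_gt p.1 k hk p.2.1 p.2.2)
  right_inv q := by
    apply Prod.ext
    · apply Subtype.ext
      exact mkσ_glue n k hk q.1.1 q.2.1
        (fun i h => glue_lt_range n k hk q.1.1 q.2.1 i h)
    · apply Subtype.ext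
      exact mkτ_glue n k hk q.1.1 q.2.1
        (fun i h => glue_gt_range n k hk q.1.1 q.2.1 i h)
theorem card_av_zero : Nat.card {π : Equiv.Perm (Fin 0) // Av π} = 1 := by
  have h : ∀ π : Equiv.Perm (Fin 0), Av π := fun π ⟨a, _⟩ => a.elim0
  rw [Nat.card_congr (Equiv.subtypeUnivEquiv h), Nat.card_eq_fintype_card, Fintype.card_perm]
  simp

theorem card_av (n : ℕ) : Nat.card {π : Equiv.Perm (Fin n) // Av π} = catalan n := by
  induction n using Nat.strong_induction_on with
  | _ n ih =>
    match n with
    | 0 => rw [card_av_zero, catalan_zero]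
    | m + 1 =>
      classical
      rw [Nat.card_eq_fintype_card, Fintype.card_subtype]
      rw [Finset.card_eq_sum_card_fiberwise
        (f := fun π : Equiv.Perm (Fin (m + 1)) => π.symm (Fin.last m)) (t := Finset.univ)
        (fun x _ => Finset.mem_univ _)]
      rw [catalan_succ]
      apply Finset.sum_congr rfl
      intro k _
      have hkm : k.val ≤ m := by omega
      rw [Finset.filter_filter]
      rw [← Fintype.card_subtype, ← Nat.card_eq_fintype_card]
      have e1 : {π : Equiv.Perm (Fin (m + 1)) // Av π ∧ π.symm (Fin.last m) = k} ≃
          {π : Equiv.Perm (Fin (m + 1)) // Av π ∧ π ⟨k.val, by omega⟩ = Fin.last m} := by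
        apply Equiv.subtypeEquivRight
        intro π
        rw [and_congr_right_iff]
        intro _
        rw [Equiv.symm_apply_eq]
        simp only [Fin.eta]
        exact eq_comm
      rw [Nat.card_congr e1, Nat.card_congr (fiberEquiv m k.val hkm), Nat.card_prod,
        ih k.val (by omega), ih (m - k.val) (by omega)]

theorem decomp_iff {m : ℕ} (hm : 1 ≤ m) (π : Equiv.Perm (Fin (m + 1))) (hAv : Av π) :
    Decomp π ↔ π (Fin.last m) = Fin.last m := by
  constructor
  · rintro ⟨i, hi0, hin, hiff⟩
    by_contra hne
    have hlt : (π (Fin.last m)).val < m := by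
      have := (π (Fin.last m)).isLt
      have : (π (Fin.last m)).val ≠ m := fun h => hne (Fin.ext (by rw [h, Fin.val_last]))
      omega
    set c := π.symm (Fin.last m) with hcdef
    have hc : π c = Fin.last m := Equiv.apply_symm_apply π _
    have hcval : c.val < m := by
      have := c.isLt
      have : c.val ≠ m := by
        intro h
        have : c = Fin.last m := Fin.ext (by rw [h, Fin.val_last])
        rw [this] at hc
        exact hne hc
      omega
    have hci : i ≤ c.val := by
      by_contra h
      push_neg at h
      have := (hiff c).mp h
      rw [hc, Fin.val_last] at this
      omega
    set a := π.symm ⟨0, by omega⟩ with hadef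
    have ha : π a = ⟨0, by omega⟩ := Equiv.apply_symm_apply π _
    have hai : a.val < i := by
      apply (hiff a).mpr
      rw [ha]
      exact hi0
    have hlast_ge : i ≤ (π (Fin.last m)).val := by
      by_contra h
      push_neg at h
      have := (hiff (Fin.last m)).mpr h
      rw [Fin.val_last] at this
      omega
    apply hAv
    refine ⟨a, c, Fin.last m, ?_, ?_, ?_, ?_⟩ <;> rw [Fin.lt_def]
    · omega
    · rw [Fin.val_last]; omega
    · rw [ha]; simp only [Fin.val_mk]; omega
    · rw [hc, Fin.val_last]; omega
  · intro h
    refine ⟨m, hm, by omega, fun a => ?_⟩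
    constructor
    · intro ha
      have : (π a).val ≠ m := by
        intro hv
        have : π a = Fin.last m := Fin.ext (by rw [hv, Fin.val_last])
        have : a = Fin.last m := π.injective (by rw [this, h])
        rw [this, Fin.val_last] at ha
        omega
      have := (π a).isLt
      omega
    · intro hpa
      have : a.val ≠ m := by
        intro hv
        have : a = Fin.last m := Fin.ext (by rw [hv, Fin.val_last])
        rw [this, h, Fin.val_last] at hpa
        omega
      have := a.isLt
      omega

theorem card_decomp_av {m : ℕ} (hm : 1 ≤ m) :
    Nat.card {π : Equiv.Perm (Fin (m + 1)) // Decomp π ∧ Av π} = catalan m := by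
  have e1 : {π : Equiv.Perm (Fin (m + 1)) // Decomp π ∧ Av π} ≃
      {π : Equiv.Perm (Fin (m + 1)) // Av π ∧ π ⟨m, by omega⟩ = Fin.last m} := by
    apply Equiv.subtypeEquivRight
    intro π
    constructor
    · rintro ⟨hd, ha⟩
      refine ⟨ha, ?_⟩
      have : (⟨m, by omega⟩ : Fin (m + 1)) = Fin.last m := Fin.ext rfl
      rw [this]
      exact (decomp_iff hm π ha).mp hd
    · rintro ⟨ha, hd⟩
      refine ⟨?_, ha⟩
      apply (decomp_iff hm π ha).mpr
      have : (⟨m, by omega⟩ : Fin (m + 1)) = Fin.last m := Fin.ext rfl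
      rw [← this]
      exact hd
  rw [Nat.card_congr e1, Nat.card_congr (fiberEquiv m m le_rfl), Nat.card_prod, card_av,
    card_av, Nat.sub_self, catalan_zero, mul_one]

theorem stmt2' (n : ℕ) (hn : 2 ≤ n) :
    Nat.card {π : Equiv.Perm (Fin n) // ¬ Decomp π ∧ Av π} = catalan n - catalan (n - 1) := by
  classical
  obtain ⟨m, rfl⟩ : ∃ m, n = m + 1 := ⟨n - 1, by omega⟩
  have hm : 1 ≤ m := by omega
  have key : Nat.card {π : Equiv.Perm (Fin (m + 1)) // Decomp π ∧ Av π} +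
      Nat.card {π : Equiv.Perm (Fin (m + 1)) // ¬ Decomp π ∧ Av π} =
      Nat.card {π : Equiv.Perm (Fin (m + 1)) // Av π} := by
    have e := Equiv.sumCompl (fun z : {π : Equiv.Perm (Fin (m + 1)) // Av π} => Decomp z.1)
    rw [← Nat.card_congr e, Nat.card_sum]
    congr 1
    · exact Nat.card_congr ((Equiv.subtypeSubtypeEquivSubtypeInter
        (fun π : Equiv.Perm (Fin (m + 1)) => Av π) (fun π => Decomp π)).trans
        (Equiv.subtypeEquivRight fun π => and_comm)).symm
    · exact Nat.card_congr ((Equiv.subtypeSubtypeEquivSubtypeInter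
        (fun π : Equiv.Perm (Fin (m + 1)) => Av π) (fun π => ¬ Decomp π)).trans
        (Equiv.subtypeEquivRight fun π => and_comm)).symm
  rw [card_av] at key
  rw [card_decomp_av hm] at key
  have : m + 1 - 1 = m := by omega
  rw [this]
  omega

/-- For n ≥ 2, the number of indecomposable 132-avoiding permutations
of {1,...,n} is Cₙ - Cₙ₋₁. -/
theorem stmt2 (n : ℕ) (hn : 2 ≤ n) :
    Nat.card {π : Equiv.Perm (Fin n) //
      (¬ ∃ i : ℕ, 0 < i ∧ i < n ∧ ∀ a : Fin n, a.val < i ↔ (π a).val < i) ∧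
      ¬ ∃ a b c : Fin n, a < b ∧ b < c ∧ π a < π c ∧ π c < π b} =
    catalan n - catalan (n - 1) := by
  exact stmt2' n hn
end

section
/- Let π be a permutation of {1,...,n} that is decomposable, with first component of length i (i.e., i is the smallest index with {π(1),...,π(i)} = {1,...,i}, and i < n). Then π avoids the pattern 132 if and only if the first component π(1)⋯π(i) avoids 132 and π(i+1)⋯π(n) is the increasing sequence (i+1)(i+2)⋯n. -/
/-- A decomposable permutation with first component of length i avoids
132 iff the first component avoids 132 and the suffix is increasing (i+1)(i+2)⋯n. -/
theorem stmt4 (n i : ℕ) (π : Equiv.Perm (Fin n))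
    (hi0 : 0 < i) (hin : i < n)
    (hcut : ∀ a : Fin n, a.val < i ↔ (π a).val < i)
    (hmin : ∀ j : ℕ, 0 < j → j < i → ¬ ∀ a : Fin n, a.val < j ↔ (π a).val < j) :
    (¬ ∃ a b c : Fin n, a < b ∧ b < c ∧ π a < π c ∧ π c < π b) ↔
    ((¬ ∃ a b c : Fin n, a < b ∧ b < c ∧ c.val < i ∧ π a < π c ∧ π c < π b) ∧
      ∀ a : Fin n, i ≤ a.val → π a = a) := by
  have hn : 0 < n := lt_trans hi0 hin
  constructor
  · intro h
    constructor
    · rintro ⟨a, b, c, hab, hbc, _, hac, hcb⟩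
      exact h ⟨a, b, c, hab, hbc, hac, hcb⟩
    · -- monotone on the suffix
      have mono : ∀ a b : Fin n, i ≤ a.val → a < b → π a < π b := by
        intro a b ha hab
        by_contra hnot
        have hne : π b ≠ π a := fun he => absurd hab (by simp [π.injective he])
        have hba : π b < π a := lt_of_le_of_ne (not_lt.mp hnot) hne
        set p : Fin n := ⟨0, hn⟩ with hp
        have hpa : p < a := by
          simp only [Fin.lt_def]
          exact lt_of_lt_of_le hi0 ha
        have hpv : (π p).val < i := (hcut p).mp hi0
        have hbv : i ≤ (π b).val := by
          have : ¬ b.val < i := not_lt.mpr (le_trans ha (le_of_lt hab))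
          exact not_lt.mp fun hb => this ((hcut b).mpr hb)
        have hpb : π p < π b := by
          simp only [Fin.lt_def]; exact lt_of_lt_of_le hpv hbv
        exact h ⟨p, a, b, hpa, hab, hpb, hba⟩
      have key : ∀ m : ℕ, ∀ a : Fin n, n ≤ a.val + m → i ≤ a.val → π a = a := by
        intro m
        induction m with
        | zero => intro a hna _; exact absurd a.isLt (not_lt.mpr (by omega))
        | succ m ih =>
          intro a hna ha
          have fixed : ∀ a' : Fin n, a.val < a'.val → π a' = a' := by
            intro a' h'
            exact ih a' (by omega) (le_trans ha (le_of_lt h'))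
          -- π a ≤ a
          have h1 : (π a).val ≤ a.val := by
            by_contra hgt
            have := fixed (π a) (not_le.mp hgt)
            have := π.injective this
            omega
          -- π⁻¹ a ≤ a
          set b := π.symm a with hb
          have hπb : π b = a := π.apply_symm_apply a
          have hbi : i ≤ b.val := by
            by_contra hb'
            have := (hcut b).mp (not_le.mp hb')
            rw [hπb] at this
            omega
          have h2 : b.val ≤ a.val := by
            by_contra hgt
            have := fixed b (not_le.mp hgt)
            rw [hπb] at this
            have : b.val = a.val := by rw [this]
            omega
          rcases lt_or_eq_of_le h2 with hlt | heq
          · exfalso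
            have := mono b a hbi (Fin.lt_def.mpr hlt)
            rw [hπb] at this
            simp only [Fin.lt_def] at this
            omega
          · have : b = a := Fin.ext heq
            rw [this] at hπb; exact hπb
      intro a ha
      exact key n a (by omega) ha
  · rintro ⟨h1, h2⟩ ⟨a, b, c, hab, hbc, hac, hcb⟩
    by_cases hc : c.val < i
    · exact h1 ⟨a, b, c, hab, hbc, hc, hac, hcb⟩
    · have hπc : π c = c := h2 c (not_lt.mp hc)
      by_cases hbv : i ≤ b.val
      · have hπb : π b = b := h2 b hbv
        rw [hπc, hπb] at hcb
        exact absurd hbc (not_lt.mpr (le_of_lt hcb))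
      · have : (π b).val < i := (hcut b).mp (not_le.mp hbv)
        rw [hπc] at hcb
        simp only [Fin.lt_def] at hcb
        omega
end

section
/- Let π be a permutation of {1,...,n} that is decomposable, with first component π^(1) = π(1)⋯π(i) where i = i_π < n. Then π avoids the pattern 2314 if and only if π^(1) avoids the pattern 231 and the suffix π(i+1)⋯π(n) avoids the pattern 2314. -/
/-- A decomposable permutation with first component of length i avoids
2314 iff the first component avoids 231 and the suffix avoids 2314. -/
theorem stmt5 (n i : ℕ) (π : Equiv.Perm (Fin n))
    (hi0 : 0 < i) (hin : i < n)
    (hcut : ∀ a : Fin n, a.val < i ↔ (π a).val < i)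
    (hmin : ∀ j : ℕ, 0 < j → j < i → ¬ ∀ a : Fin n, a.val < j ↔ (π a).val < j) :
    (¬ ∃ a b c d : Fin n, a < b ∧ b < c ∧ c < d ∧
        π c < π a ∧ π a < π b ∧ π b < π d) ↔
    ((¬ ∃ a b c : Fin n, a < b ∧ b < c ∧ c.val < i ∧ π c < π a ∧ π a < π b) ∧
      ¬ ∃ a b c d : Fin n, i ≤ a.val ∧ a < b ∧ b < c ∧ c < d ∧
        π c < π a ∧ π a < π b ∧ π b < π d) := by
  constructor
  · intro h
    constructor
    · rintro ⟨a, b, c, hab, hbc, hci, h1, h2⟩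
      apply h
      refine ⟨a, b, c, ⟨i, hin⟩, hab, hbc, ?_, h1, h2, ?_⟩
      · exact Fin.lt_def.mpr hci
      · have hb : b.val < i := lt_trans (Fin.lt_def.mp hbc) hci
        have hpb : (π b).val < i := (hcut b).mp hb
        have hpd : ¬ (π ⟨i, hin⟩).val < i := fun hh => by
          have := (hcut ⟨i, hin⟩).mpr hh
          simp at this
        exact Fin.lt_def.mpr (lt_of_lt_of_le hpb (le_of_not_gt hpd))
    · rintro ⟨a, b, c, d, _, hab, hbc, hcd, h1, h2, h3⟩
      exact h ⟨a, b, c, d, hab, hbc, hcd, h1, h2, h3⟩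
  · rintro ⟨h1, h2⟩ ⟨a, b, c, d, hab, hbc, hcd, p1, p2, p3⟩
    by_cases ha : i ≤ a.val
    · exact h2 ⟨a, b, c, d, ha, hab, hbc, hcd, p1, p2, p3⟩
    · push_neg at ha
      have hpa : (π a).val < i := (hcut a).mp ha
      have hpc : (π c).val < i := lt_trans (Fin.lt_def.mp p1) hpa
      have hc : c.val < i := (hcut c).mpr hpc
      exact h1 ⟨a, b, c, hab, hbc, hc, p1, p2⟩
end

section
/- Let π be a permutation of {1,...,n} that is decomposable with first component π^(1) = π(1)⋯π(i), i = i_π < n. Then π avoids the pattern 3124 if and only if π^(1) avoids the pattern 312 and the suffix π(i+1)⋯π(n) avoids 3124. -/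
/-- A decomposable permutation with first component of length i avoids
3124 iff the first component avoids 312 and the suffix avoids 3124. -/
theorem stmt6 (n i : ℕ) (π : Equiv.Perm (Fin n))
    (hi0 : 0 < i) (hin : i < n)
    (hcut : ∀ a : Fin n, a.val < i ↔ (π a).val < i)
    (hmin : ∀ j : ℕ, 0 < j → j < i → ¬ ∀ a : Fin n, a.val < j ↔ (π a).val < j) :
    (¬ ∃ a b c d : Fin n, a < b ∧ b < c ∧ c < d ∧
        π b < π c ∧ π c < π a ∧ π a < π d) ↔
    ((¬ ∃ a b c : Fin n, a < b ∧ b < c ∧ c.val < i ∧ π b < π c ∧ π c < π a) ∧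
      ¬ ∃ a b c d : Fin n, i ≤ a.val ∧ a < b ∧ b < c ∧ c < d ∧
        π b < π c ∧ π c < π a ∧ π a < π d) := by
  constructor
  · intro h
    constructor
    · rintro ⟨a, b, c, hab, hbc, hci, p1, p2⟩
      set d : Fin n := ⟨i, hin⟩ with hd
      have hcd : c < d := by simp [Fin.lt_def, hd, hci]
      have ha : a.val < i := lt_trans (lt_trans hab hbc) hci
      have hπa : (π a).val < i := (hcut a).1 ha
      have hπd : ¬ (π d).val < i := by
        rw [← hcut d]; simp [hd]
      have p3 : π a < π d := by
        rw [Fin.lt_def]; omega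
      exact h ⟨a, b, c, d, hab, hbc, hcd, p1, p2, p3⟩
    · rintro ⟨a, b, c, d, _, hab, hbc, hcd, p1, p2, p3⟩
      exact h ⟨a, b, c, d, hab, hbc, hcd, p1, p2, p3⟩
  · rintro ⟨h1, h2⟩ ⟨a, b, c, d, hab, hbc, hcd, p1, p2, p3⟩
    by_cases ha : i ≤ a.val
    · exact h2 ⟨a, b, c, d, ha, hab, hbc, hcd, p1, p2, p3⟩
    · push_neg at ha
      have hπa : (π a).val < i := (hcut a).1 ha
      have hπc : (π c).val < i := lt_trans p2 hπa
      have hc : c.val < i := (hcut c).2 hπc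
      exact h1 ⟨a, b, c, hab, hbc, hc, p1, p2⟩
end

section
/- Let π be a permutation of {1,...,n} that is decomposable with first component π^(1) = π(1)⋯π(i), i = i_π < n. Then π avoids the pattern 3214 if and only if π^(1) avoids the pattern 321 and the suffix π(i+1)⋯π(n) avoids 3214. -/
/-- A decomposable permutation with first component of length i avoids
3214 iff the first component avoids 321 and the suffix avoids 3214. -/
theorem stmt7 (n i : ℕ) (π : Equiv.Perm (Fin n))
    (hi0 : 0 < i) (hin : i < n)
    (hcut : ∀ a : Fin n, a.val < i ↔ (π a).val < i)
    (hmin : ∀ j : ℕ, 0 < j → j < i → ¬ ∀ a : Fin n, a.val < j ↔ (π a).val < j) :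
    (¬ ∃ a b c d : Fin n, a < b ∧ b < c ∧ c < d ∧
        π c < π b ∧ π b < π a ∧ π a < π d) ↔
    ((¬ ∃ a b c : Fin n, a < b ∧ b < c ∧ c.val < i ∧ π c < π b ∧ π b < π a) ∧
      ¬ ∃ a b c d : Fin n, i ≤ a.val ∧ a < b ∧ b < c ∧ c < d ∧
        π c < π b ∧ π b < π a ∧ π a < π d) := by
  constructor
  · intro h
    refine ⟨?_, ?_⟩
    · rintro ⟨a, b, c, hab, hbc, hci, h1, h2⟩
      have hai : a.val < i := lt_trans (lt_trans hab hbc) hci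
      apply h
      refine ⟨a, b, c, ⟨i, hin⟩, hab, hbc, hci, h1, h2, ?_⟩
      have h3 : (π a).val < i := (hcut a).mp hai
      have h4 : ¬ (π ⟨i, hin⟩).val < i := fun h' => by
        have := (hcut ⟨i, hin⟩).mpr h'
        simp at this
      exact Fin.lt_def.mpr (lt_of_lt_of_le h3 (le_of_not_gt h4))
    · rintro ⟨a, b, c, d, _, hab, hbc, hcd, p1, p2, p3⟩
      exact h ⟨a, b, c, d, hab, hbc, hcd, p1, p2, p3⟩
  · rintro ⟨h1, h2⟩ ⟨a, b, c, d, hab, hbc, hcd, p1, p2, p3⟩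
    by_cases hc : c.val < i
    · exact h1 ⟨a, b, c, hab, hbc, hc, p1, p2⟩
    · have hpc : ¬ (π c).val < i := fun h' => hc ((hcut c).mpr h')
      have hpa : ¬ (π a).val < i := fun h' => hpc (lt_trans (lt_trans p1 p2) h')
      have ha : i ≤ a.val := le_of_not_gt fun h' => hpa ((hcut a).mp h')
      exact h2 ⟨a, b, c, d, ha, hab, hbc, hcd, p1, p2, p3⟩
end

section
/- Let π be a decomposable permutation of {1,...,n} with first component π^(1) = π(1)⋯π(i), i = i_π < n. Then π avoids the pattern 2143 if and only if either (a) i = 1 (so π(1)=1) and π(2)⋯π(n) avoids 2143, or (b) 2 ≤ i ≤ n−1, π^(1) avoids 2143, and π(i+1)⋯π(n) is the increasing sequence (i+1)(i+2)⋯n. -/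
/-- A decomposable permutation with first component of length i avoids
2143 iff either (a) i = 1 and the suffix avoids 2143, or (b) 2 ≤ i ≤ n-1, the first
component avoids 2143, and the suffix is the increasing sequence (i+1)⋯n. -/
theorem stmt8 (n i : ℕ) (π : Equiv.Perm (Fin n))
    (hi0 : 0 < i) (hin : i < n)
    (hcut : ∀ a : Fin n, a.val < i ↔ (π a).val < i)
    (hmin : ∀ j : ℕ, 0 < j → j < i → ¬ ∀ a : Fin n, a.val < j ↔ (π a).val < j) :
    (¬ ∃ a b c d : Fin n, a < b ∧ b < c ∧ c < d ∧
        π b < π a ∧ π a < π d ∧ π d < π c) ↔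
    ((i = 1 ∧ ¬ ∃ a b c d : Fin n, 1 ≤ a.val ∧ a < b ∧ b < c ∧ c < d ∧
        π b < π a ∧ π a < π d ∧ π d < π c) ∨
     (2 ≤ i ∧ i ≤ n - 1 ∧
        (¬ ∃ a b c d : Fin n, a < b ∧ b < c ∧ c < d ∧ d.val < i ∧
          π b < π a ∧ π a < π d ∧ π d < π c) ∧
        ∀ a : Fin n, i ≤ a.val → π a = a)) := by
  have hn : 0 < n := lt_trans hi0 hin
  constructor
  · intro hav
    rcases Nat.lt_or_ge i 2 with h1 | h2
    · left
      refine ⟨by omega, ?_⟩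
      rintro ⟨a, b, c, d, _, hab, hbc, hcd, k1, k2, k3⟩
      exact hav ⟨a, b, c, d, hab, hbc, hcd, k1, k2, k3⟩
    · right
      refine ⟨h2, by omega, ?_, ?_⟩
      · rintro ⟨a, b, c, d, hab, hbc, hcd, _, k1, k2, k3⟩
        exact hav ⟨a, b, c, d, hab, hbc, hcd, k1, k2, k3⟩
      · -- the suffix is pointwise fixed
        have hzval : (⟨0, hn⟩ : Fin n).val = 0 := rfl
        have hπz : π ⟨0, hn⟩ ≠ ⟨0, hn⟩ := by
          intro hzz
          apply hmin 1 one_pos (by omega)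
          intro x
          constructor
          · intro hx
            have hxz : x = ⟨0, hn⟩ := Fin.ext (by omega)
            rw [hxz, hzz]
            omega
          · intro hx
            have hπx : π x = ⟨0, hn⟩ := Fin.ext (by omega)
            have : x = ⟨0, hn⟩ := π.injective (by rw [hπx, hzz])
            rw [this]
            omega
        have hπzpos : 0 < (π ⟨0, hn⟩).val := by
          rcases Nat.eq_zero_or_pos (π ⟨0, hn⟩).val |>.symm with h | h
          · exact h
          · exact absurd (Fin.ext (by omega) : π ⟨0, hn⟩ = ⟨0, hn⟩) hπz
        set b : Fin n := π.symm ⟨0, hn⟩ with hb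
        have hπb : π b = ⟨0, hn⟩ := π.apply_symm_apply _
        have hπbval : (π b).val = 0 := by rw [hπb]
        have hbpos : 0 < b.val := by
          rcases Nat.eq_zero_or_pos b.val |>.symm with h | h
          · exact h
          · have hbz : b = ⟨0, hn⟩ := Fin.ext (by omega)
            rw [hbz] at hπb
            exact absurd hπb hπz
        have hbvi : b.val < i := (hcut b).mpr (by omega)
        have key : ∀ m : ℕ, ∀ a : Fin n, a.val = m → i ≤ a.val → π a = a := by
          intro m
          induction m using Nat.strong_induction_on with
          | _ m ih =>
            intro a ham hia
            by_contra hne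
            have hfix : ∀ x : Fin n, i ≤ x.val → x.val < a.val → π x = x := by
              intro x hx1 hx2
              exact ih x.val (ham ▸ hx2) x rfl hx1
            have hπa_ge : i ≤ (π a).val := by
              by_contra h
              have := (hcut a).mpr (by omega)
              omega
            have hgt : a.val < (π a).val := by
              rcases Nat.lt_or_ge a.val (π a).val with h | h
              · exact h
              have hne' : (π a).val ≠ a.val := fun hh => hne (Fin.ext hh)
              have hlt : (π a).val < a.val := by omega
              have hfx := hfix (π a) hπa_ge hlt
              have : π a = a := π.injective hfx
              exact absurd this hne
            set d : Fin n := π.symm a with hd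
            have hπd : π d = a := π.apply_symm_apply a
            have hdvi : i ≤ d.val := by
              by_contra h
              have := (hcut d).mp (by omega)
              rw [hπd] at this
              omega
            have hda : a.val < d.val := by
              rcases Nat.lt_or_ge a.val d.val with h | h
              · exact h
              rcases Nat.lt_or_ge d.val a.val with h' | h'
              · have := hfix d hdvi h'
                rw [hπd] at this
                omega
              · have hda' : d = a := Fin.ext (by omega)
                rw [hda'] at hπd
                exact absurd hπd hne
            apply hav
            have hπza : (π ⟨0, hn⟩).val < i := (hcut ⟨0, hn⟩).mp (by omega)
            refine ⟨⟨0, hn⟩, b, a, d, ?_, ?_, ?_, ?_, ?_, ?_⟩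
            · exact Fin.lt_def.mpr (by omega)
            · exact Fin.lt_def.mpr (by omega)
            · exact Fin.lt_def.mpr hda
            · exact Fin.lt_def.mpr (by omega)
            · refine Fin.lt_def.mpr ?_
              rw [hπd]
              omega
            · exact Fin.lt_def.mpr (by rw [hπd]; exact hgt)
        intro a ha
        exact key a.val a rfl ha
  · rintro (⟨hi1, hav⟩ | ⟨h2i, _, hav, hid⟩)
    · rintro ⟨a, b, c, d, hab, hbc, hcd, k1, k2, k3⟩
      by_cases ha : 1 ≤ a.val
      · exact hav ⟨a, b, c, d, ha, hab, hbc, hcd, k1, k2, k3⟩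
      · have hπa : (π a).val < 1 := hi1 ▸ (hcut a).mp (by omega)
        have := Fin.lt_def.mp k1
        omega
    · rintro ⟨a, b, c, d, hab, hbc, hcd, k1, k2, k3⟩
      by_cases hd : d.val < i
      · exact hav ⟨a, b, c, d, hab, hbc, hcd, hd, k1, k2, k3⟩
      · have hπd : π d = d := hid d (le_of_not_gt hd)
        have hπc_gt : i ≤ (π c).val := by
          have := Fin.lt_def.mp k3
          rw [hπd] at this
          omega
        have hc : i ≤ c.val := by
          by_contra h
          have := (hcut c).mp (by omega)
          omega
        have hπc : π c = c := hid c hc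
        have := Fin.lt_def.mp k3
        have := Fin.lt_def.mp hcd
        rw [hπd, hπc] at *
        omega
end

section
/- Let π be a decomposable permutation of {1,...,n} with first component π^(1) = π(1)⋯π(i), i = i_π < n. Then π avoids the pattern 2134 if and only if either (a) i = 1 and π(2)⋯π(n) avoids 2134, or (b) 2 ≤ i ≤ n−1, π^(1) avoids the pattern 213, and π(i+1)⋯π(n) is the decreasing sequence n(n−1)⋯(i+1). -/
/-- A decomposable permutation with first component of length i avoids
2134 iff either (a) i = 1 and the suffix avoids 2134, or (b) 2 ≤ i ≤ n-1, the first
component avoids 213, and the suffix is the decreasing sequence n(n-1)⋯(i+1). -/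
theorem stmt9 (n i : ℕ) (π : Equiv.Perm (Fin n))
    (hi0 : 0 < i) (hin : i < n)
    (hcut : ∀ a : Fin n, a.val < i ↔ (π a).val < i)
    (hmin : ∀ j : ℕ, 0 < j → j < i → ¬ ∀ a : Fin n, a.val < j ↔ (π a).val < j) :
    (¬ ∃ a b c d : Fin n, a < b ∧ b < c ∧ c < d ∧
        π b < π a ∧ π a < π c ∧ π c < π d) ↔
    ((i = 1 ∧ ¬ ∃ a b c d : Fin n, 1 ≤ a.val ∧ a < b ∧ b < c ∧ c < d ∧
        π b < π a ∧ π a < π c ∧ π c < π d) ∨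
     (2 ≤ i ∧ i ≤ n - 1 ∧
        (¬ ∃ a b c : Fin n, a < b ∧ b < c ∧ c.val < i ∧ π b < π a ∧ π a < π c) ∧
        ∀ a : Fin n, i ≤ a.val → (π a).val = n - 1 - (a.val - i))) := by
  have hn0 : 0 < n := lt_trans hi0 hin
  constructor
  · intro havoid
    by_cases hi1 : i = 1
    · left
      refine ⟨hi1, ?_⟩
      rintro ⟨a, b, c, d, _, h1, h2, h3, h4, h5, h6⟩
      exact havoid ⟨a, b, c, d, h1, h2, h3, h4, h5, h6⟩
    · right
      have hi2 : 2 ≤ i := by omega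
      -- there is an inversion inside the prefix
      have h0 : ∃ p q : Fin n, p < q ∧ p.val < i ∧ q.val < i ∧ π q < π p := by
        set z : Fin n := ⟨0, hn0⟩ with hz
        have hzv : z.val = 0 := rfl
        have hne : π z ≠ z := by
          intro h
          apply hmin 1 one_pos (by omega)
          intro a
          constructor
          · intro ha
            have ha0 : a = z := Fin.ext (by omega)
            rw [ha0, h, hzv]; omega
          · intro ha
            have hpa : π a = z := Fin.ext (by omega)
            have h2 : a = z := π.injective (by rw [hpa, h])
            have : a.val = 0 := by rw [h2]
            omega
        set q := π.symm z with hq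
        have hπq : π q = z := π.apply_symm_apply _
        have hqne : q ≠ z := by
          intro h; rw [h] at hπq; exact hne hπq
        have hq0 : 0 < q.val := by
          rcases Nat.eq_zero_or_pos q.val with h | h
          · exact absurd (Fin.ext (by omega)) hqne
          · exact h
        have hqi : q.val < i := (hcut q).mpr (by rw [hπq]; omega)
        have hpz0 : 0 < (π z).val := by
          rcases Nat.eq_zero_or_pos (π z).val with h | h
          · exact absurd (Fin.ext (by omega)) hne
          · exact h
        refine ⟨z, q, ?_, by omega, hqi, ?_⟩
        · exact Fin.lt_def.mpr (by omega)
        · rw [hπq]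
          exact Fin.lt_def.mpr (by omega)
      obtain ⟨p, q, hpq, hpi, hqi, hπpq⟩ := h0
      -- π is strictly decreasing on the suffix
      have hdec : ∀ a b : Fin n, i ≤ a.val → a < b → π b < π a := by
        intro a b hai hab
        rcases lt_trichotomy (π a) (π b) with h | h | h
        · exfalso
          apply havoid
          refine ⟨p, q, a, b, hpq, Fin.lt_def.mpr (by omega), hab, hπpq, ?_, h⟩
          have h1 : (π p).val < i := (hcut p).mp hpi
          have h2 : ¬ (π a).val < i := fun hh => by
            have := (hcut a).mpr hh; omega
          exact Fin.lt_def.mpr (by omega)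
        · exact absurd (π.injective h) (by
            intro hh; rw [hh] at hab; exact lt_irrefl _ hab)
        · exact h
      refine ⟨hi2, by omega, ?_, ?_⟩
      · rintro ⟨a, b, c, hab, hbc, hci, h1, h2⟩
        apply havoid
        set d := π.symm ⟨n - 1, by omega⟩ with hd
        have hπd : π d = ⟨n - 1, by omega⟩ := π.apply_symm_apply _
        have hdi : ¬ d.val < i := fun hh => by
          have := (hcut d).mp hh
          rw [hπd] at this
          simp at this; omega
        refine ⟨a, b, c, d, hab, hbc, Fin.lt_def.mpr (by omega), h1, h2, ?_⟩
        have hci2 : (π c).val < i := (hcut c).mp hci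
        rw [hπd]
        exact Fin.lt_def.mpr (by simp; omega)
      · -- suffix values
        have upper : ∀ k, ∀ a : Fin n, a.val = i + k → (π a).val + k ≤ n - 1 := by
          intro k
          induction k with
          | zero =>
            intro a _
            have := (π a).isLt; omega
          | succ k ih =>
            intro a ha
            have hlt : i + k < n := by omega
            have h := hdec ⟨i + k, hlt⟩ a (by simp) (Fin.lt_def.mpr (by simp; omega))
            have h2 := ih ⟨i + k, hlt⟩ rfl
            have h3 := Fin.lt_def.mp h
            omega
        have lower : ∀ k, ∀ a : Fin n, i ≤ a.val → a.val + k = n - 1 →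
            i + k ≤ (π a).val := by
          intro k
          induction k with
          | zero =>
            intro a ha _
            have : ¬ (π a).val < i := fun hh => by
              have := (hcut a).mpr hh; omega
            omega
          | succ k ih =>
            intro a ha hk
            have hlt : a.val + 1 < n := by omega
            have h := hdec a ⟨a.val + 1, hlt⟩ ha (Fin.lt_def.mpr (by simp))
            have h2 := ih ⟨a.val + 1, hlt⟩ (by simp; omega) (by simp; omega)
            have h3 := Fin.lt_def.mp h
            omega
        intro a ha
        have h1 := upper (a.val - i) a (by omega)
        have h2 := lower (n - 1 - a.val) a ha (by have := a.isLt; omega)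
        have := a.isLt
        omega
  · rintro (⟨hi1, havoid⟩ | ⟨hi2, hin1, h213, hsuf⟩) <;>
      rintro ⟨a, b, c, d, hab, hbc, hcd, h1, h2, h3⟩
    · apply havoid
      refine ⟨a, b, c, d, ?_, hab, hbc, hcd, h1, h2, h3⟩
      by_contra hh
      have ha0 : a.val < i := by omega
      have : (π a).val < i := (hcut a).mp ha0
      have := Fin.lt_def.mp h1
      omega
    · by_cases hci : c.val < i
      · exact h213 ⟨a, b, c, hab, hbc, hci, h1, h2⟩
      · have hdi : i ≤ d.val := by
          have := Fin.lt_def.mp hcd; omega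
        have hc := hsuf c (by omega)
        have hd := hsuf d hdi
        have h3' := Fin.lt_def.mp h3
        have := Fin.lt_def.mp hcd
        have := d.isLt
        omega
end

section
/- Let π be a decomposable permutation of {1,...,n} with first component π^(1) = π(1)⋯π(i), i = i_π < n. Then π avoids the pattern 1324 if and only if π^(1) avoids the pattern 132 and the suffix π(i+1)⋯π(n) avoids the pattern 213. -/
/-- A decomposable permutation with first component of length i avoids
1324 iff the first component avoids 132 and the suffix avoids 213. -/
theorem stmt10 (n i : ℕ) (π : Equiv.Perm (Fin n))
    (hi0 : 0 < i) (hin : i < n)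
    (hcut : ∀ a : Fin n, a.val < i ↔ (π a).val < i)
    (hmin : ∀ j : ℕ, 0 < j → j < i → ¬ ∀ a : Fin n, a.val < j ↔ (π a).val < j) :
    (¬ ∃ a b c d : Fin n, a < b ∧ b < c ∧ c < d ∧
        π a < π c ∧ π c < π b ∧ π b < π d) ↔
    ((¬ ∃ a b c : Fin n, a < b ∧ b < c ∧ c.val < i ∧ π a < π c ∧ π c < π b) ∧
      ¬ ∃ a b c : Fin n, i ≤ a.val ∧ a < b ∧ b < c ∧ π b < π a ∧ π a < π c) := by
  constructor
  · intro h
    constructor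
    · rintro ⟨a, b, c, hab, hbc, hci, h1, h2⟩
      refine h ⟨a, b, c, ⟨i, hin⟩, hab, hbc, Fin.lt_def.mpr hci, h1, h2, ?_⟩
      have hb : b.val < i := lt_trans (Fin.lt_def.mp hbc) hci
      have hπb : (π b).val < i := (hcut b).mp hb
      have hπd : ¬ (π ⟨i, hin⟩).val < i := fun hh => absurd ((hcut _).mpr hh) (by simp)
      exact Fin.lt_def.mpr (lt_of_lt_of_le hπb (not_lt.mp hπd))
    · rintro ⟨a, b, c, hia, hab, hbc, h1, h2⟩
      have h0n : 0 < n := lt_trans hi0 hin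
      refine h ⟨⟨0, h0n⟩, a, b, c, Fin.lt_def.mpr (lt_of_lt_of_le hi0 hia), hab, hbc,
        ?_, h1, h2⟩
      have hx : (π ⟨0, h0n⟩).val < i := (hcut _).mp hi0
      have hb : i ≤ b.val := le_trans hia (le_of_lt (Fin.lt_def.mp hab))
      have hπb : ¬ (π b).val < i := fun hh => absurd ((hcut b).mpr hh) (not_lt.mpr hb)
      exact Fin.lt_def.mpr (lt_of_lt_of_le hx (not_lt.mp hπb))
  · rintro ⟨h132, h213⟩ ⟨a, b, c, d, hab, hbc, hcd, h1, h2, h3⟩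
    by_cases hb : b.val < i
    · have hπb : (π b).val < i := (hcut b).mp hb
      have hπc : (π c).val < i := lt_trans (Fin.lt_def.mp h2) hπb
      have hc : c.val < i := (hcut c).mpr hπc
      exact h132 ⟨a, b, c, hab, hbc, hc, h1, h2⟩
    · exact h213 ⟨b, c, d, not_lt.mp hb, hbc, hcd, h2, h3⟩
end

section
/- Let π be a decomposable permutation of {1,...,n} with first component π^(1) = π(1)⋯π(i), i = i_π < n. Then π avoids the pattern 1234 if and only if either (a) π^(1) is the decreasing sequence i(i−1)⋯1 and π(i+1)⋯π(n) avoids 123, or (b) π^(1) is not the decreasing sequence, π^(1) avoids 123, 3 ≤ i ≤ n−1, and π(i+1)⋯π(n) is the decreasing sequence n(n−1)⋯(i+1). -/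
/-- Chain lemma: if π is strictly decreasing on positions in [lo, hi), then
values drop by at least the distance. -/
lemma stmt11_chain {n : ℕ} (π : Equiv.Perm (Fin n)) (lo hi : ℕ)
    (hdec : ∀ a b : Fin n, lo ≤ a.val → a.val < b.val → b.val < hi → (π b).val < (π a).val) :
    ∀ m : ℕ, ∀ a b : Fin n, lo ≤ a.val → b.val = a.val + m → b.val < hi →
      (π b).val + m ≤ (π a).val := by
  intro m
  induction m with
  | zero =>
    intro a b ha hb hbh
    have : a = b := Fin.ext (by omega)
    rw [this]
    omega
  | succ m ih =>
    intro a b ha hb hbh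
    have hbn : a.val + m < n := by omega
    obtain ⟨b', hb'⟩ : ∃ x : Fin n, x.val = a.val + m := ⟨⟨a.val + m, hbn⟩, rfl⟩
    have h1 : (π b').val + m ≤ (π a).val := ih a b' ha (by omega) (by omega)
    have h2 : (π b).val < (π b').val := hdec b' b (by omega) (by omega) hbh
    omega

lemma stmt11_dec {n : ℕ} (π : Equiv.Perm (Fin n)) (lo hi : ℕ) (hin : hi ≤ n)
    (hval : ∀ a : Fin n, lo ≤ a.val → a.val < hi → lo ≤ (π a).val ∧ (π a).val < hi)
    (hdec : ∀ a b : Fin n, lo ≤ a.val → a.val < b.val → b.val < hi → (π b).val < (π a).val) :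
    ∀ a : Fin n, lo ≤ a.val → a.val < hi → (π a).val = hi - 1 - (a.val - lo) := by
  intro a ha hah
  obtain ⟨t, ht⟩ : ∃ x : Fin n, x.val = hi - 1 := ⟨⟨hi - 1, by omega⟩, rfl⟩
  obtain ⟨s, hs⟩ : ∃ x : Fin n, x.val = lo := ⟨⟨lo, by omega⟩, rfl⟩
  have h1 : (π t).val + (hi - 1 - a.val) ≤ (π a).val :=
    stmt11_chain π lo hi hdec (hi - 1 - a.val) a t ha (by omega) (by omega)
  have h2 : (π a).val + (a.val - lo) ≤ (π s).val :=
    stmt11_chain π lo hi hdec (a.val - lo) s a (by omega) (by omega) hah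
  have h3 := hval t (by omega) (by omega)
  have h4 := hval s (by omega) (by omega)
  omega

/-- A decomposable permutation with first component of length i avoids
1234 iff either (a) the first component is the decreasing sequence i(i-1)⋯1 and the
suffix avoids 123, or (b) the first component is not decreasing, avoids 123,
3 ≤ i ≤ n-1, and the suffix is the decreasing sequence n(n-1)⋯(i+1). -/
theorem stmt11 (n i : ℕ) (π : Equiv.Perm (Fin n))
    (hi0 : 0 < i) (hin : i < n)
    (hcut : ∀ a : Fin n, a.val < i ↔ (π a).val < i)
    (hmin : ∀ j : ℕ, 0 < j → j < i → ¬ ∀ a : Fin n, a.val < j ↔ (π a).val < j) :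
    (¬ ∃ a b c d : Fin n, a < b ∧ b < c ∧ c < d ∧
        π a < π b ∧ π b < π c ∧ π c < π d) ↔
    (((∀ a : Fin n, a.val < i → (π a).val = i - 1 - a.val) ∧
        ¬ ∃ a b c : Fin n, i ≤ a.val ∧ a < b ∧ b < c ∧ π a < π b ∧ π b < π c) ∨
     ((¬ ∀ a : Fin n, a.val < i → (π a).val = i - 1 - a.val) ∧
        (¬ ∃ a b c : Fin n, a < b ∧ b < c ∧ c.val < i ∧ π a < π b ∧ π b < π c) ∧
        3 ≤ i ∧ i ≤ n - 1 ∧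
        ∀ a : Fin n, i ≤ a.val → (π a).val = n - 1 - (a.val - i))) := by
  have hge : ∀ a : Fin n, i ≤ a.val → i ≤ (π a).val := by
    intro a ha
    by_contra h
    have := (hcut a).mpr (by omega)
    omega
  have hlt : ∀ a : Fin n, a.val < i → (π a).val < i := fun a ha => (hcut a).mp ha
  constructor
  · -- forward
    intro H
    by_cases hd : ∀ a : Fin n, a.val < i → (π a).val = i - 1 - a.val
    · left
      refine ⟨hd, ?_⟩
      rintro ⟨a, b, c, hia, hab, hbc, h1, h2⟩
      obtain ⟨e, he⟩ : ∃ x : Fin n, x.val = 0 := ⟨⟨0, by omega⟩, rfl⟩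
      have hpe : (π e).val < i := hlt e (by omega)
      have hpa : i ≤ (π a).val := hge a hia
      exact H ⟨e, a, b, c, show e.val < a.val by omega, hab, hbc,
        show (π e).val < (π a).val by omega, h1, h2⟩
    · right
      -- there is an ascent in the prefix
      have hasc : ∃ a b : Fin n, a.val < b.val ∧ b.val < i ∧ (π a).val < (π b).val := by
        by_contra hno
        push_neg at hno
        apply hd
        have hdec : ∀ a b : Fin n, 0 ≤ a.val → a.val < b.val → b.val < i →
            (π b).val < (π a).val := by
          intro a b _ hab hbi
          have h1 := hno a b hab hbi
          have hne : (π a).val ≠ (π b).val := fun h => by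
            have : a = b := π.injective (Fin.ext h); omega
          omega
        intro a ha
        have := stmt11_dec π 0 i (le_of_lt hin)
          (fun a _ hai => ⟨Nat.zero_le _, hlt a hai⟩) hdec a (Nat.zero_le _) ha
        omega
      obtain ⟨a0, b0, hab0, hb0, hasc0⟩ := hasc
      refine ⟨hd, ?_, ?_, by omega, ?_⟩
      · rintro ⟨a, b, c, hab, hbc, hc, h1, h2⟩
        obtain ⟨d, hdd⟩ : ∃ x : Fin n, x.val = n - 1 := ⟨⟨n - 1, by omega⟩, rfl⟩
        have hpc : (π c).val < i := hlt c hc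
        have hpd : i ≤ (π d).val := hge d (by omega)
        exact H ⟨a, b, c, d, hab, hbc,
          show c.val < d.val by omega,
          h1, h2, show (π c).val < (π d).val by omega⟩
      · -- 3 ≤ i
        by_contra h3
        have hi2 : i = 2 := by omega
        have ha0 : a0.val = 0 := by omega
        have hb0' : b0.val = 1 := by omega
        have hpa0 : (π a0).val < 2 := by have := hlt a0 (by omega); omega
        have hpb0 : (π b0).val < 2 := by have := hlt b0 (by omega); omega
        have hpa00 : (π a0).val = 0 := by omega
        refine hmin 1 one_pos (by omega) ?_
        intro a
        constructor
        · intro ha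
          have : a = a0 := Fin.ext (by omega)
          rw [this, hpa00]; omega
        · intro ha
          have : π a = π a0 := Fin.ext (by omega)
          have := π.injective this
          omega
      · -- suffix decreasing
        have hdec : ∀ a b : Fin n, i ≤ a.val → a.val < b.val → b.val < n →
            (π b).val < (π a).val := by
          intro p q hp hpq _
          by_contra hnd
          have hne : (π p).val ≠ (π q).val := fun h => by
            have : p = q := π.injective (Fin.ext h); omega
          have hpq' : (π p).val < (π q).val := by omega
          have hb0p : i ≤ (π p).val := hge p hp
          have hb0v : (π b0).val < i := hlt b0 hb0
          exact H ⟨a0, b0, p, q, show a0.val < b0.val from hab0,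
            show b0.val < p.val by omega, show p.val < q.val from hpq,
            show (π a0).val < (π b0).val from hasc0,
            show (π b0).val < (π p).val by omega,
            show (π p).val < (π q).val from hpq'⟩
        intro a ha
        exact stmt11_dec π i n le_rfl (fun a hai _ => ⟨hge a hai, (π a).isLt⟩) hdec a ha a.isLt
  · -- backward
    rintro (⟨hd, hno⟩ | ⟨_, hno, _, _, hsuf⟩) ⟨a, b, c, d, hab, hbc, hcd, h1, h2, h3⟩
    · -- case (a)
      have hb : i ≤ b.val := by
        by_contra hbi
        have hab' : a.val < b.val := hab
        have := hd a (by omega)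
        have := hd b (by omega)
        have h1' : (π a).val < (π b).val := h1
        omega
      exact hno ⟨b, c, d, hb, hbc, hcd, h2, h3⟩
    · -- case (b)
      have hc : c.val < i := by
        by_contra hci
        have hcd' : c.val < d.val := hcd
        have := hsuf c (by omega)
        have := hsuf d (by omega)
        have h3' : (π c).val < (π d).val := h3
        have := d.isLt
        omega
      exact hno ⟨a, b, c, hab, hbc, hc, h1, h2⟩
end

section
/- Let π be a decomposable permutation of {1,...,n} with first component π^(1) = π(1)⋯π(i), i = i_π < n. Then π avoids the vincular pattern 1-23 (no indices a < b with b+1 ≤ n satisfying π(a) < π(b) < π(b+1)) if and only if π(i) = 1, the prefix π(1)⋯π(i−1) (a permutation of {2,...,i}) avoids the vincular pattern 1-23, and π(i+1)⋯π(n) is the decreasing sequence n(n−1)⋯(i+1). -/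
set_option maxHeartbeats 1000000


/-- A decomposable permutation with first component of length i avoids
the vincular pattern 1-23 iff π(i) = 1, the prefix π(1)⋯π(i-1) avoids 1-23, and the
suffix is the decreasing sequence n(n-1)⋯(i+1).  (0-indexed: π(i-1) has value 0.) -/
theorem stmt13 (n i : ℕ) (π : Equiv.Perm (Fin n))
    (hi0 : 0 < i) (hin : i < n)
    (hcut : ∀ a : Fin n, a.val < i ↔ (π a).val < i)
    (hmin : ∀ j : ℕ, 0 < j → j < i → ¬ ∀ a : Fin n, a.val < j ↔ (π a).val < j) :
    (¬ ∃ a b c : Fin n, a < b ∧ c.val = b.val + 1 ∧ π a < π b ∧ π b < π c) ↔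
    ((π ⟨i - 1, by omega⟩).val = 0 ∧
      (¬ ∃ a b c : Fin n, a < b ∧ c.val = b.val + 1 ∧ c.val < i - 1 ∧
        π a < π b ∧ π b < π c) ∧
      ∀ a : Fin n, i ≤ a.val → (π a).val = n - 1 - (a.val - i)) := by
  -- position of value 0
  obtain ⟨p, hp⟩ := π.surjective ⟨0, by omega⟩
  have hp0 : (π p).val = 0 := by rw [hp]
  have hpi : p.val < i := (hcut p).mpr (by omega)
  constructor
  · intro havoid
    -- π(i-1) = 0
    have h1 : (π ⟨i - 1, by omega⟩).val = 0 := by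
      by_contra h
      have hpne : p.val ≠ i - 1 := by
        intro he
        apply h
        have : p = ⟨i - 1, by omega⟩ := Fin.ext he
        rw [← this]; exact hp0
      refine havoid ⟨p, ⟨i - 1, by omega⟩, ⟨i, by omega⟩, ?_, by simp; omega, ?_, ?_⟩
      · exact Fin.lt_def.mpr (by simp; omega)
      · refine Fin.lt_def.mpr ?_
        have : (π ⟨i - 1, by omega⟩).val ≠ 0 := h
        omega
      · refine Fin.lt_def.mpr ?_
        have ha : (π ⟨i - 1, by omega⟩).val < i := (hcut _).mp (by simp; omega)
        have hb : ¬ (π ⟨i, by omega⟩).val < i := by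
          rw [← hcut]; simp
        omega
    -- suffix strictly decreasing
    have hdec : ∀ k : ℕ, i ≤ k → ∀ hc : k + 1 < n,
        (π ⟨k + 1, hc⟩).val < (π ⟨k, by omega⟩).val := by
      intro k hk hc
      by_contra hle
      have hne : (π ⟨k + 1, hc⟩).val ≠ (π ⟨k, by omega⟩).val := by
        intro he
        have := π.injective (Fin.ext he : π ⟨k + 1, hc⟩ = π ⟨k, by omega⟩)
        simp [Fin.ext_iff] at this
      have hbk : ¬ (π ⟨k, by omega⟩).val < i := by rw [← hcut]; simp; omega
      refine havoid ⟨p, ⟨k, by omega⟩, ⟨k + 1, hc⟩, ?_, rfl, ?_, ?_⟩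
      · exact Fin.lt_def.mpr (by simp; omega)
      · exact Fin.lt_def.mpr (by omega)
      · exact Fin.lt_def.mpr (by omega)
    -- chain
    have hchain : ∀ k₂ : ℕ, ∀ k₁ : ℕ, ∀ _ : i ≤ k₁, ∀ _ : k₁ ≤ k₂, ∀ h2 : k₂ < n,
        (π ⟨k₂, h2⟩).val + (k₂ - k₁) ≤ (π ⟨k₁, by omega⟩).val := by
      intro k₂
      induction k₂ with
      | zero =>
        intro k₁ h h' h2
        have hk0 : k₁ = 0 := by omega
        subst hk0; simp
      | succ m ih =>
        intro k₁ h h' h2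
        rcases Nat.lt_or_ge k₁ (m + 1) with hlt | hge
        · have h3 : m < n := by omega
          have := ih k₁ h (by omega) h3
          have := hdec m (by omega) h2
          omega
        · have : k₁ = m + 1 := by omega
          subst this; simp
    refine ⟨h1, ?_, ?_⟩
    · rintro ⟨a, b, c, hab, hc, _, h₁, h₂⟩
      exact havoid ⟨a, b, c, hab, hc, h₁, h₂⟩
    · intro a ha
      have hn' : n - 1 < n := by omega
      have hi' : i < n := hin
      have hlo := hchain (n - 1) a.val ha (by omega) hn'
      have hhi := hchain a.val i (le_refl i) ha a.isLt
      have hea : (⟨a.val, a.isLt⟩ : Fin n) = a := rfl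
      rw [hea] at hlo hhi
      have hn1 : ¬ (π ⟨n - 1, hn'⟩).val < i := by rw [← hcut]; simp; omega
      have htop : (π ⟨i, hi'⟩).val < n := (π _).isLt
      omega
  · rintro ⟨h1, h2, h3⟩ ⟨a, b, c, hab, hc, h₁, h₂⟩
    rcases Nat.lt_or_ge b.val i with hb | hb
    · -- b.val < i, so c.val ≤ i
      rcases Nat.lt_or_ge c.val (i - 1) with hcc | hcc
      · exact h2 ⟨a, b, c, hab, hc, hcc, h₁, h₂⟩
      · rcases Nat.lt_or_ge c.val i with hci | hci
        · -- c.val = i - 1, π c = 0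
          have hc0 : (π c).val = 0 := by
            have he : c = ⟨i - 1, by omega⟩ := Fin.ext (by simp; omega)
            rw [he]; exact h1
          have := Fin.lt_def.mp h₂
          omega
        · -- c.val = i, so b.val = i - 1, π b = 0
          have hb0 : (π b).val = 0 := by
            have he : b = ⟨i - 1, by omega⟩ := Fin.ext (by simp; omega)
            rw [he]; exact h1
          have := Fin.lt_def.mp h₁
          omega
    · -- b and c in suffix
      have hcb : i ≤ c.val := by omega
      have e1 := h3 b hb
      have e2 := h3 c hcb
      have := Fin.lt_def.mp h₂
      have : c.val < n := c.isLt
      omega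
end

section
/- Let π be a decomposable permutation of {1,...,n} with first component π^(1) = π(1)⋯π(i), i = i_π < n. Then π avoids the vincular pattern 1-32 (no indices a < b with π(a) < π(b+1) < π(b)) if and only if π^(1) avoids the vincular pattern 1-32 and π(i+1)⋯π(n) is the increasing sequence (i+1)(i+2)⋯n. -/
/-- A decomposable permutation with first component of length i avoids
the vincular pattern 1-32 iff the first component avoids 1-32 and the suffix is the
increasing sequence (i+1)(i+2)⋯n. -/
theorem stmt14 (n i : ℕ) (π : Equiv.Perm (Fin n))
    (hi0 : 0 < i) (hin : i < n)
    (hcut : ∀ a : Fin n, a.val < i ↔ (π a).val < i)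
    (hmin : ∀ j : ℕ, 0 < j → j < i → ¬ ∀ a : Fin n, a.val < j ↔ (π a).val < j) :
    (¬ ∃ a b c : Fin n, a < b ∧ c.val = b.val + 1 ∧ π a < π c ∧ π c < π b) ↔
    ((¬ ∃ a b c : Fin n, a < b ∧ c.val = b.val + 1 ∧ c.val < i ∧
        π a < π c ∧ π c < π b) ∧
      ∀ a : Fin n, i ≤ a.val → π a = a) := by
  constructor
  · intro h
    refine ⟨?_, ?_⟩
    · rintro ⟨a, b, c, hab, hc, _, h1, h2⟩
      exact h ⟨a, b, c, hab, hc, h1, h2⟩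
    · -- no descent within the suffix
      have L1 : ∀ b c : Fin n, i ≤ b.val → c.val = b.val + 1 → π b < π c := by
        intro b c hb hc
        by_contra hnot
        have hne : π c ≠ π b := by
          intro he
          have : c = b := π.injective he
          have : c.val = b.val := congrArg Fin.val this
          omega
        have hlt : π c < π b := lt_of_le_of_ne (not_lt.mp hnot) hne
        have hn0 : 0 < n := lt_trans hi0 hin
        set a0 : Fin n := ⟨0, hn0⟩ with ha0
        have hpa0 : (π a0).val < i := (hcut a0).mp (by simpa [ha0] using hi0)
        have hpc : ¬ (π c).val < i := by
          intro hh
          have := (hcut c).mpr hh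
          omega
        have h1 : π a0 < π c := by
          have : (π a0).val < (π c).val := by omega
          exact this
        have h2 : a0 < b := by
          show a0.val < b.val
          simp only [ha0]
          omega
        exact h ⟨a0, b, c, h2, hc, h1, hlt⟩
      have L2 : ∀ k : ℕ, ∀ a : Fin n, a.val = i + k → a.val ≤ (π a).val := by
        intro k
        induction k with
        | zero =>
          intro a ha
          have : ¬ (π a).val < i := by
            intro hh
            have := (hcut a).mpr hh
            omega
          omega
        | succ k ih =>
          intro a ha
          have hb : i + k < n := by have := a.isLt; omega
          set b : Fin n := ⟨i + k, hb⟩ with hbdef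
          have hib : b.val ≤ (π b).val := ih b rfl
          have hlt : π b < π a := L1 b a (by simp [hbdef]) (by simp [hbdef]; omega)
          have : (π b).val < (π a).val := hlt
          have hbv : b.val = i + k := rfl
          omega
      have L3 : ∀ k : ℕ, ∀ a : Fin n, a.val + k = n - 1 → i ≤ a.val → π a = a := by
        intro k
        induction k with
        | zero =>
          intro a ha hia
          have h2 := L2 (a.val - i) a (by omega)
          have := (π a).isLt
          exact Fin.ext (by omega)
        | succ k ih =>
          intro a ha hia
          have hc : a.val + 1 < n := by omega
          set c : Fin n := ⟨a.val + 1, hc⟩ with hcdef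
          have hcc : π c = c := ih c (by simp [hcdef]; omega) (by simp [hcdef]; omega)
          have hlt : π a < π c := L1 a c hia (by simp [hcdef])
          have h2 := L2 (a.val - i) a (by omega)
          have : (π a).val < c.val := by rw [hcc] at hlt; exact hlt
          exact Fin.ext (by simp [hcdef] at this; omega)
      intro a hia
      exact L3 (n - 1 - a.val) a (by have := a.isLt; omega) hia
  · rintro ⟨h1, h2⟩ ⟨a, b, c, hab, hc, hac, hcb⟩
    by_cases hci : c.val < i
    · exact h1 ⟨a, b, c, hab, hc, hci, hac, hcb⟩
    · push_neg at hci
      have hpc : π c = c := h2 c hci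
      by_cases hbi : i ≤ b.val
      · have hpb : π b = b := h2 b hbi
        rw [hpc, hpb] at hcb
        have : c.val < b.val := hcb
        omega
      · push_neg at hbi
        have : (π b).val < i := (hcut b).mp hbi
        have hcb' : (π c).val < (π b).val := hcb
        rw [hpc] at hcb'
        omega
end

section
/- For every n ≥ 2, the number of indecomposable permutations of {1,...,n} avoiding the vincular pattern 1-32 equals the number of permutations of {1,...,n} avoiding the vincular pattern 1-32 whose last two entries form a rise, i.e., π(n−1) < π(n). -/
/-- For n ≥ 2, the number of indecomposable permutations of {1,...,n}
avoiding the vincular pattern 1-32 equals the number of permutations of {1,...,n}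
avoiding 1-32 that end with a rise. -/
theorem stmt15 (n : ℕ) (hn : 2 ≤ n) :
    Nat.card {π : Equiv.Perm (Fin n) //
      (¬ ∃ i : ℕ, 0 < i ∧ i < n ∧ ∀ a : Fin n, a.val < i ↔ (π a).val < i) ∧
      ¬ ∃ a b c : Fin n, a < b ∧ c.val = b.val + 1 ∧ π a < π c ∧ π c < π b} =
    Nat.card {π : Equiv.Perm (Fin n) //
      (¬ ∃ a b c : Fin n, a < b ∧ c.val = b.val + 1 ∧ π a < π c ∧ π c < π b) ∧
      π ⟨n - 2, by omega⟩ < π ⟨n - 1, by omega⟩} := by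
  classical
  haveI : NeZero n := ⟨by omega⟩
  -- abbreviations
  let L : Fin n := ⟨n - 1, by omega⟩
  let M : Fin n := ⟨n - 2, by omega⟩
  let Av : Equiv.Perm (Fin n) → Prop :=
    fun π => ¬ ∃ a b c : Fin n, a < b ∧ c.val = b.val + 1 ∧ π a < π c ∧ π c < π b
  have hone : (1 : Fin n).val = 1 := by
    rw [Fin.val_one', Nat.mod_eq_of_lt (by omega)]
  have hLone : L + 1 = 0 := by
    apply Fin.ext
    rw [Fin.val_add, hone]
    show (n - 1 + 1) % n = (0 : Fin n).val
    have h1 : n - 1 + 1 = n := by omega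
    rw [h1, Nat.mod_self, Fin.val_zero]
  have hnegone : (-1 : Fin n) = L := by
    have : L + 1 + -1 = 0 + -1 := by rw [hLone]
    simpa using this.symm
  have addval : ∀ v : Fin n, v ≠ L → (v + 1).val = v.val + 1 := by
    intro v hv
    have hlt : v.val < n - 1 := by
      have h1 := v.isLt
      rcases Nat.lt_or_ge v.val (n - 1) with h | h
      · exact h
      · exact absurd (Fin.ext (show v.val = (L : Fin n).val by show v.val = n - 1; omega)) hv
    rw [Fin.val_add, hone, Nat.mod_eq_of_lt (by omega)]
  have valpos : ∀ v : Fin n, v ≠ 0 → 0 < v.val := by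
    intro v hv
    rcases Nat.eq_zero_or_pos v.val with h | h
    · exact absurd (Fin.ext (by simp [h])) hv
    · exact h
  have subval : ∀ v : Fin n, v ≠ 0 → (v + (-1)).val = v.val - 1 := by
    intro v hv
    have h0 : 0 < v.val := valpos v hv
    have h1 := v.isLt
    have h2 : v.val + (n - 1) = (v.val - 1) + n := by omega
    rw [Fin.val_add, hnegone]
    show (v.val + (n - 1)) % n = v.val - 1
    rw [h2, Nat.add_mod_right, Nat.mod_eq_of_lt (by omega)]
  -- avoidance is preserved by the value shifts, at fixed/zero last value
  have shiftAv : ∀ π : Equiv.Perm (Fin n), Av π → π L = L →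
      Av (Equiv.addRight (1 : Fin n) * π) := by
    intro π hav hfix
    rintro ⟨a, b, c, hab, hc, h1, h2⟩
    simp only [Equiv.Perm.mul_apply, Equiv.coe_addRight] at h1 h2
    have hbval : b.val + 1 ≤ n - 1 := by have := c.isLt; omega
    have haval : a.val < b.val := hab
    have hπb : π b ≠ L := by
      intro h
      have hb : b = L := π.injective (h.trans hfix.symm)
      have : b.val = n - 1 := by rw [hb]
      omega
    have hπa : π a ≠ L := by
      intro h
      have ha : a = L := π.injective (h.trans hfix.symm)
      have : a.val = n - 1 := by rw [ha]
      omega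
    by_cases hπc : π c = L
    · rw [hπc, hLone] at h1
      rw [Fin.lt_def] at h1
      simp at h1
    · apply hav
      refine ⟨a, b, c, hab, hc, ?_, ?_⟩
      · have e1 := addval (π a) hπa
        have e2 := addval (π c) hπc
        rw [Fin.lt_def] at h1 ⊢
        omega
      · have e2 := addval (π c) hπc
        have e3 := addval (π b) hπb
        rw [Fin.lt_def] at h2 ⊢
        omega
  have unshiftAv : ∀ σ : Equiv.Perm (Fin n), Av σ → σ L = 0 →
      Av (Equiv.addRight (-1 : Fin n) * σ) := by
    intro σ hav hzero
    rintro ⟨a, b, c, hab, hc, h1, h2⟩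
    simp only [Equiv.Perm.mul_apply, Equiv.coe_addRight] at h1 h2
    have hbval : b.val + 1 ≤ n - 1 := by have := c.isLt; omega
    have haval : a.val < b.val := hab
    have hσb : σ b ≠ 0 := by
      intro h
      have hb : b = L := σ.injective (h.trans hzero.symm)
      have : b.val = n - 1 := by rw [hb]
      omega
    have hσa : σ a ≠ 0 := by
      intro h
      have ha : a = L := σ.injective (h.trans hzero.symm)
      have : a.val = n - 1 := by rw [ha]
      omega
    by_cases hσc : σ c = 0
    · rw [hσc] at h2
      have hv : ((0 : Fin n) + -1).val = n - 1 := by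
        rw [zero_add, hnegone]
      have hb' := subval (σ b) hσb
      have hblt := (σ b).isLt
      rw [Fin.lt_def] at h2
      omega
    · apply hav
      refine ⟨a, b, c, hab, hc, ?_, ?_⟩
      · have e1 := subval (σ a) hσa
        have e2 := subval (σ c) hσc
        have h0a := valpos (σ a) hσa
        have h0c := valpos (σ c) hσc
        rw [Fin.lt_def] at h1 ⊢
        omega
      · have e2 := subval (σ c) hσc
        have e3 := subval (σ b) hσb
        have h0c := valpos (σ c) hσc
        have h0b := valpos (σ b) hσb
        rw [Fin.lt_def] at h2 ⊢
        omega
  -- characterization 1: among avoiders, indecomposable ↔ π L ≠ L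
  have h1 : ∀ π : Equiv.Perm (Fin n),
      ((¬ ∃ i : ℕ, 0 < i ∧ i < n ∧ ∀ a : Fin n, a.val < i ↔ (π a).val < i) ∧ Av π)
      ↔ (Av π ∧ π L ≠ L) := by
    intro π
    constructor
    · rintro ⟨hnd, hav⟩
      refine ⟨hav, fun hfix => hnd ⟨n - 1, by omega, by omega, ?_⟩⟩
      intro a
      constructor
      · intro ha
        have hne : π a ≠ L := by
          intro h
          have h' : a = L := π.injective (h.trans hfix.symm)
          have : a.val = n - 1 := by rw [h']
          omega
        have hl := (π a).isLt
        have : (π a).val ≠ n - 1 := fun h => hne (Fin.ext h)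
        omega
      · intro ha
        by_contra hcon
        have hA : a = L := by
          apply Fin.ext
          show a.val = n - 1
          have := a.isLt
          omega
        rw [hA, hfix] at ha
        have : (n - 1 : ℕ) < n - 1 := ha
        omega
    · rintro ⟨hav, hne⟩
      refine ⟨?_, hav⟩
      rintro ⟨i, hi0, hin, hdec⟩
      -- position of value n-1
      have hπj : π (π.symm L) = L := π.apply_symm_apply L
      set j : Fin n := π.symm L with hj
      have hjL : j ≠ L := by
        intro h
        apply hne
        rw [h] at hπj
        exact hπj
      have hjlt : j.val < n - 1 := by
        have h1 := j.isLt
        have : j.val ≠ n - 1 := fun h => hjL (Fin.ext h)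
        omega
      have hji : i ≤ j.val := by
        by_contra h
        have h2 := (hdec j).1 (by omega)
        rw [hπj] at h2
        have : (n - 1 : ℕ) < i := h2
        omega
      -- position of value 0
      have hπa : π (π.symm 0) = 0 := π.apply_symm_apply 0
      set a : Fin n := π.symm 0 with ha
      have hai : a.val < i := by
        apply (hdec a).2
        rw [hπa]
        exact hi0
      -- successor of j
      set c : Fin n := ⟨j.val + 1, by omega⟩ with hc
      have hci : ¬ (c.val < i) := by
        show ¬ (j.val + 1 < i)
        omega
      have hπci : i ≤ (π c).val := by
        by_contra h
        exact hci ((hdec c).2 (by omega))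
      have hπcL : π c ≠ L := by
        intro h
        have h2 : c = j := π.injective (h.trans hπj.symm)
        have h3 : c.val = j.val := by rw [h2]
        have : j.val + 1 = j.val := h3
        omega
      apply hav
      refine ⟨a, j, c, ?_, rfl, ?_, ?_⟩
      · show a.val < j.val
        omega
      · rw [hπa, Fin.lt_def]
        show (0 : Fin n).val < (π c).val
        rw [Fin.val_zero]
        omega
      · rw [hπj, Fin.lt_def]
        show (π c).val < n - 1
        have hl := (π c).isLt
        have : (π c).val ≠ n - 1 := fun h => hπcL (Fin.ext h)
        omega
  -- characterization 2: among avoiders, ends with rise ↔ π L ≠ 0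
  have h2 : ∀ π : Equiv.Perm (Fin n),
      (Av π ∧ π M < π L) ↔ (Av π ∧ π L ≠ 0) := by
    intro π
    constructor
    · rintro ⟨hav, hrise⟩
      refine ⟨hav, ?_⟩
      intro h
      rw [h, Fin.lt_def, Fin.val_zero] at hrise
      omega
    · rintro ⟨hav, hne⟩
      refine ⟨hav, ?_⟩
      have hML : M ≠ L := by
        intro h
        have : (n - 2 : ℕ) = n - 1 := congrArg Fin.val h
        omega
      have hπML : π M ≠ π L := fun h => hML (π.injective h)
      rcases lt_or_gt_of_ne hπML with h | h
      · exact h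
      · -- π L < π M : derive an occurrence, contradiction
        exfalso
        have hπa : π (π.symm 0) = 0 := π.apply_symm_apply 0
        set a : Fin n := π.symm 0 with ha
        have haL : a ≠ L := by
          intro hh
          apply hne
          rw [hh] at hπa
          exact hπa
        have haM : a ≠ M := by
          intro hh
          rw [hh] at hπa
          have h' : (π L).val < (π M).val := h
          rw [hπa, Fin.val_zero] at h'
          omega
        have haval : a.val < n - 2 := by
          have hl := a.isLt
          have e1 : a.val ≠ n - 1 := fun hh => haL (Fin.ext hh)
          have e2 : a.val ≠ n - 2 := fun hh => haM (Fin.ext hh)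
          omega
        apply hav
        refine ⟨a, M, L, ?_, ?_, ?_, ?_⟩
        · show a.val < n - 2
          exact haval
        · show (n - 1 : ℕ) = (n - 2) + 1
          omega
        · rw [hπa, Fin.lt_def, Fin.val_zero]
          exact valpos (π L) hne
        · exact h
  -- convert both sides
  have e1 : Nat.card {π : Equiv.Perm (Fin n) //
      (¬ ∃ i : ℕ, 0 < i ∧ i < n ∧ ∀ a : Fin n, a.val < i ↔ (π a).val < i) ∧
      ¬ ∃ a b c : Fin n, a < b ∧ c.val = b.val + 1 ∧ π a < π c ∧ π c < π b}
      = Nat.card {π : Equiv.Perm (Fin n) // Av π ∧ π L ≠ L} :=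
    Nat.card_congr (Equiv.subtypeEquivRight h1)
  have e2 : Nat.card {π : Equiv.Perm (Fin n) //
      (¬ ∃ a b c : Fin n, a < b ∧ c.val = b.val + 1 ∧ π a < π c ∧ π c < π b) ∧
      π ⟨n - 2, by omega⟩ < π ⟨n - 1, by omega⟩}
      = Nat.card {π : Equiv.Perm (Fin n) // Av π ∧ π L ≠ 0} :=
    Nat.card_congr (Equiv.subtypeEquivRight h2)
  rw [e1, e2]
  rw [Nat.card_eq_fintype_card, Nat.card_eq_fintype_card,
    Fintype.card_subtype, Fintype.card_subtype]
  -- counting: split into the fixed-last-value part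
  have key : ∀ x : Fin n,
      (Finset.univ.filter (fun π : Equiv.Perm (Fin n) => Av π ∧ π L = x)).card
      + (Finset.univ.filter (fun π : Equiv.Perm (Fin n) => Av π ∧ π L ≠ x)).card
      = (Finset.univ.filter Av).card := by
    intro x
    rw [← Finset.filter_filter Av (fun π : Equiv.Perm (Fin n) => π L = x),
      ← Finset.filter_filter Av (fun π : Equiv.Perm (Fin n) => π L ≠ x)]
    exact Finset.card_filter_add_card_filter_not
      (fun π : Equiv.Perm (Fin n) => π L = x)
  have bij : (Finset.univ.filter (fun π : Equiv.Perm (Fin n) => Av π ∧ π L = L)).card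
      = (Finset.univ.filter (fun π : Equiv.Perm (Fin n) => Av π ∧ π L = 0)).card := by
    apply Finset.card_bij' (fun π _ => Equiv.addRight (1 : Fin n) * π)
      (fun σ _ => Equiv.addRight (-1 : Fin n) * σ)
    · intro π hπ
      simp only [Finset.mem_filter, Finset.mem_univ, true_and] at hπ ⊢
      refine ⟨shiftAv π hπ.1 hπ.2, ?_⟩
      have hv : (Equiv.addRight (1 : Fin n) * π) L = π L + 1 := by
        simp
      rw [hv, hπ.2]
      exact hLone
    · intro σ hσ
      simp only [Finset.mem_filter, Finset.mem_univ, true_and] at hσ ⊢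
      refine ⟨unshiftAv σ hσ.1 hσ.2, ?_⟩
      have hv : (Equiv.addRight (-1 : Fin n) * σ) L = σ L + -1 := by
        simp
      rw [hv, hσ.2, zero_add]
      exact hnegone
    · intro π hπ
      ext x
      simp
    · intro σ hσ
      ext x
      simp
  have k1 := key L
  have k2 := key 0
  omega
end

section
/- Let σ be an indecomposable pattern and let π be a permutation of {1,...,n} that decomposes as a concatenation of components π^(1)⋯π^(k) (each component, after reduction, being an indecomposable permutation). Then π avoids σ if and only if every component π^(j) (reduced to a permutation of an initial segment) avoids σ. Consequently, for σ indecomposable, a permutation avoids σ if and only if each of its components avoids σ. -/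
/-- An occurrence of an indecomposable pattern σ cannot straddle a cut point c of π. -/
lemma stmt17_span {n k : ℕ} (σ : Equiv.Perm (Fin k))
    (hσ : ¬ ∃ i : ℕ, 0 < i ∧ i < k ∧ ∀ a : Fin k, a.val < i ↔ (σ a).val < i)
    (π : Equiv.Perm (Fin n)) (f : Fin k → Fin n) (hf : StrictMono f)
    (hiso : ∀ a b : Fin k, σ a < σ b ↔ π (f a) < π (f b))
    (c : ℕ) (hc : ∀ a : Fin n, a.val < c ↔ (π a).val < c)
    (j0 j1 : Fin k) (h0 : (f j0).val < c) (h1 : c ≤ (f j1).val) : False := by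
  classical
  set A : Finset (Fin k) := Finset.univ.filter (fun j => (f j).val < c) with hA
  set i : ℕ := A.card with hi
  have memA : ∀ j : Fin k, j ∈ A ↔ (f j).val < c := by
    intro j; simp [hA]
  have claim1 : ∀ j : Fin k, (f j).val < c ↔ j.val < i := by
    intro j
    constructor
    · intro hj
      have hsub : Finset.Iic j ⊆ A := by
        intro j' hj'
        rw [memA]
        exact lt_of_le_of_lt (hf.monotone (Finset.mem_Iic.mp hj')) hj
      have := Finset.card_le_card hsub
      rw [Fin.card_Iic] at this
      omega
    · intro hj
      by_contra hfj
      have hsub : A ⊆ Finset.Iio j := by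
        intro j' hj'
        rw [memA] at hj'
        rw [Finset.mem_Iio]
        by_contra hle
        push_neg at hle
        exact hfj (lt_of_le_of_lt (Fin.le_def.mp (hf.monotone hle)) hj')
      have := Finset.card_le_card hsub
      rw [Fin.card_Iio] at this
      omega
  set C : Finset (Fin k) := A.image (fun a => σ a) with hCdef
  have hCcard : C.card = i := by
    rw [hCdef, Finset.card_image_of_injective _ σ.injective]
  have claim2 : ∀ a : Fin k, (π (f a)).val < c ↔ (σ a).val < i := by
    intro a
    constructor
    · intro ha
      have hsub : Finset.Iic (σ a) ⊆ C := by
        intro v hv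
        rw [Finset.mem_Iic] at hv
        rw [hCdef, Finset.mem_image]
        refine ⟨σ.symm v, ?_, by simp⟩
        rw [memA, hc]
        rcases lt_or_eq_of_le hv with hlt | heq
        · have hσlt : σ (σ.symm v) < σ a := by simpa using hlt
          exact lt_trans (Fin.lt_def.mp ((hiso _ _).mp hσlt)) ha
        · have hva : σ.symm v = a := by
            apply σ.injective; simpa using heq
          rw [hva]; exact ha
      have := Finset.card_le_card hsub
      rw [Fin.card_Iic, hCcard] at this
      omega
    · intro ha
      by_contra hfa
      push_neg at hfa
      have hsub : C ⊆ Finset.Iio (σ a) := by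
        intro v hv
        rw [hCdef, Finset.mem_image] at hv
        obtain ⟨b, hb, rfl⟩ := hv
        rw [memA, hc] at hb
        rw [Finset.mem_Iio]
        have : π (f b) < π (f a) := Fin.lt_def.mpr (lt_of_lt_of_le hb hfa)
        exact (hiso b a).mpr this
      have := Finset.card_le_card hsub
      rw [Fin.card_Iio, hCcard] at this
      omega
  have hipos : 0 < i := by
    have := (claim1 j0).mp h0; omega
  have hilt : i < k := by
    have h1' : ¬ (f j1).val < c := Nat.not_lt.mpr h1
    have := (claim1 j1)
    have hj1 : ¬ j1.val < i := fun h => h1' ((claim1 j1).mpr h)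
    have := j1.isLt
    omega
  exact hσ ⟨i, hipos, hilt, fun a =>
    (claim1 a).symm.trans ((hc (f a)).trans (claim2 a))⟩

/-- For an indecomposable pattern σ, a permutation π avoids σ iff every
component of π avoids σ (an occurrence of σ cannot span two components).  Components
are the blocks between consecutive cut points with no cut point strictly inside. -/
theorem stmt17 (n k : ℕ) (hk : 0 < k) (σ : Equiv.Perm (Fin k))
    (hσ : ¬ ∃ i : ℕ, 0 < i ∧ i < k ∧ ∀ a : Fin k, a.val < i ↔ (σ a).val < i)
    (π : Equiv.Perm (Fin n)) :
    (¬ ∃ f : Fin k → Fin n, StrictMono f ∧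
        ∀ a b : Fin k, σ a < σ b ↔ π (f a) < π (f b)) ↔
    (∀ s t : ℕ, s < t → t ≤ n →
      (∀ a : Fin n, a.val < s ↔ (π a).val < s) →
      (∀ a : Fin n, a.val < t ↔ (π a).val < t) →
      (∀ c : ℕ, s < c → c < t → ¬ ∀ a : Fin n, a.val < c ↔ (π a).val < c) →
      ¬ ∃ f : Fin k → Fin n, StrictMono f ∧
        (∀ j, s ≤ (f j).val ∧ (f j).val < t) ∧
        ∀ a b : Fin k, σ a < σ b ↔ π (f a) < π (f b)) := by
  classical
  constructor
  · -- avoidance globally implies avoidance in each component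
    rintro havoid s t _ _ _ _ _ ⟨f, hf, _, hiso⟩
    exact havoid ⟨f, hf, hiso⟩
  · -- component avoidance implies global avoidance
    rintro h ⟨f, hf, hiso⟩
    set j0 : Fin k := ⟨0, hk⟩ with hj0
    set m : ℕ := (f j0).val with hm
    have hmn : m < n := (f j0).isLt
    -- cut points
    set Cut : ℕ → Prop := fun c => ∀ a : Fin n, a.val < c ↔ (π a).val < c with hCut
    have hCut0 : Cut 0 := fun a => by simp
    have hCutn : Cut n := fun a => by simp [a.isLt, (π a).isLt]
    set S : Finset ℕ := (Finset.Iic m).filter Cut with hS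
    have hS0 : 0 ∈ S := by
      rw [hS, Finset.mem_filter]
      exact ⟨Finset.mem_Iic.mpr (Nat.zero_le m), hCut0⟩
    set s : ℕ := S.max' ⟨0, hS0⟩ with hs
    have hsS : s ∈ S := S.max'_mem _
    have hsm : s ≤ m := Finset.mem_Iic.mp (Finset.mem_filter.mp hsS).1
    have hsCut : Cut s := (Finset.mem_filter.mp hsS).2
    set T : Finset ℕ := (Finset.Icc (m + 1) n).filter Cut with hT
    have hTn : n ∈ T := by
      simp only [hT, Finset.mem_filter, Finset.mem_Icc]
      exact ⟨⟨hmn, le_refl n⟩, hCutn⟩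
    set t : ℕ := T.min' ⟨n, hTn⟩ with ht
    have htT : t ∈ T := T.min'_mem _
    have htm : m + 1 ≤ t := (Finset.mem_Icc.mp (Finset.mem_filter.mp htT).1).1
    have htn : t ≤ n := (Finset.mem_Icc.mp (Finset.mem_filter.mp htT).1).2
    have htCut : Cut t := (Finset.mem_filter.mp htT).2
    have hst : s < t := lt_of_le_of_lt hsm htm
    -- no cut strictly inside
    have hnocut : ∀ c : ℕ, s < c → c < t → ¬ Cut c := by
      intro c hsc hct hcCut
      rcases le_or_gt c m with hcm | hmc
      · have : c ∈ S := by
          rw [hS, Finset.mem_filter]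
          exact ⟨Finset.mem_Iic.mpr hcm, hcCut⟩
        exact absurd (S.le_max' c this) (not_le.mpr hsc)
      · have : c ∈ T := by
          simp only [hT, Finset.mem_filter, Finset.mem_Icc]
          exact ⟨⟨hmc, le_of_lt (lt_of_lt_of_le hct htn)⟩, hcCut⟩
        exact absurd (T.min'_le c this) (not_le.mpr hct)
    -- all f j lie in [s, t)
    have hrange : ∀ j : Fin k, s ≤ (f j).val ∧ (f j).val < t := by
      intro j
      constructor
      · calc s ≤ m := hsm
          _ ≤ (f j).val := Fin.le_def.mp (hf.monotone (show j0 ≤ j from Fin.mk_le_of_le_val (Nat.zero_le _)))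
      · by_contra hge
        push_neg at hge
        exact stmt17_span σ hσ π f hf hiso t htCut j0 j (lt_of_lt_of_le (Nat.lt_succ_self m) htm) hge
    exact h s t hst htn hsCut htCut hnocut ⟨f, hf, hrange, hiso⟩
end
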